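/- arXiv:1801.04889 — 5 statements merged into one kernel-verified Lean document; each statement's English description precedes it below -/
import Mathlib

section
/- Let G be a group with proper length ℓ and associated left-invariant metric d, let X be a proper metric space (closed balls are compact) on which G acts freely and properly discontinuously by isometries, and let f : G → X be the G-equivariant map f(g) = g·x₀ (x₀ = f(1)). Assume f is a coarse embedding: there are nondecreasing ρ₋, ρ₊ : [0,∞) → [0,∞) with ρ₋(t) → ∞ such that ρ₋(d(g,h)) ≤ d_X(f(g), f(h)) ≤ ρ₊(d(g,h)) for all g,h ∈ G. Let (N_n)_{n∈ℕ} be normal subgroups of G with trivial intersection; equip G/N_n with the quotient length induced by ℓ, and equip the orbit space X/N_n with the distance d_{X,n}(N_n·x, N_n·y) = inf{d_X(h·x, h'·y) : h, h' ∈ N_n}. Then there exist nondecreasing ρ'₋, ρ'₊ : [0,∞) → [0,∞) with ρ'₋(t) → ∞ such that for every n and all x̄, ȳ ∈ G/N_n one has ρ'₋(d̄_n(x̄,ȳ)) ≤ d_{X,n}(f_n(x̄), f_n(ȳ)) ≤ ρ'₊(d̄_n(x̄,ȳ)), where d̄_n is the quotient metric on G/N_n and f_n : G/N_n → X/N_n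 is the induced map gN_n ↦ N_n·f(g). -/
/-- A length function on a group. -/
structure IsLengthFunction {G : Type*} [Group G] (ℓ : G → ℝ) : Prop where
  nonneg : ∀ g, 0 ≤ ℓ g
  eq_zero_iff : ∀ g, ℓ g = 0 ↔ g = 1
  inv_eq : ∀ g, ℓ g⁻¹ = ℓ g
  subadd : ∀ g h, ℓ (g * h) ≤ ℓ g + ℓ h

/-- A proper length function: balls are finite. -/
def IsProperLength {G : Type*} [Group G] (ℓ : G → ℝ) : Prop :=
  IsLengthFunction ℓ ∧ ∀ R : ℝ, {g : G | ℓ g ≤ R}.Finite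

/-- The quotient length on the coset space `G ⧸ N`:
`ℓ̄(gN) = inf {ℓ(g') : g'N = gN} = inf {ℓ(gh) : h ∈ N}`. -/
noncomputable def quotLength {G : Type*} [Group G] (ℓ : G → ℝ) (N : Subgroup G) :
    G ⧸ N → ℝ :=
  fun x => sInf {r : ℝ | ∃ g : G, QuotientGroup.mk g = x ∧ ℓ g = r}

/-- The quotient metric on the coset space `G ⧸ N` induced by a length function `ℓ`:
`d̄(xN, yN) = inf {ℓ(g⁻¹h) : gN = xN, hN = yN}`; for normal `N` this is the metric of the
quotient length. -/
noncomputable def quotDist {G : Type*} [Group G] (ℓ : G → ℝ) (N : Subgroup G) :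
    G ⧸ N → G ⧸ N → ℝ :=
  fun x y => sInf {r : ℝ | ∃ g h : G,
    QuotientGroup.mk g = x ∧ QuotientGroup.mk h = y ∧ ℓ (g⁻¹ * h) = r}

/-- A family of spaces (with given distance functions) coarsely embeds uniformly into
Hilbert space: there are real Hilbert spaces `H j`, maps `F j`, and common nondecreasing
control functions `ρ₋, ρ₊` with `ρ₋ → ∞`. -/
def UnifCoarseEmbedHilbert {J : Type*} (X : J → Type*) (d : ∀ j, X j → X j → ℝ) : Prop :=
  ∃ (H : J → Type) (iN : ∀ j, NormedAddCommGroup (H j))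
    (_ : ∀ j, @InnerProductSpace ℝ (H j) inferInstance (iN j).toSeminormedAddCommGroup)
    (_ : ∀ j, @CompleteSpace (H j) (iN j).toMetricSpace.toPseudoMetricSpace.toUniformSpace)
    (F : ∀ j, X j → H j) (ρm ρp : ℝ → ℝ),
    Monotone ρm ∧ Monotone ρp ∧
    Filter.Tendsto ρm Filter.atTop Filter.atTop ∧
    ∀ (j : J) (x y : X j),
      ρm (d j x y) ≤ @dist (H j) (iN j).toMetricSpace.toPseudoMetricSpace.toDist (F j x) (F j y) ∧
      @dist (H j) (iN j).toMetricSpace.toPseudoMetricSpace.toDist (F j x) (F j y) ≤ ρp (d j x y)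

/-- Residual finiteness: every nontrivial element survives in some finite quotient
(equivalently, has nontrivial image under some homomorphism to a finite group). -/
def ResiduallyFinite (G : Type*) [Group G] : Prop :=
  ∀ g : G, g ≠ 1 → ∃ N : Subgroup G, N.Normal ∧ N.FiniteIndex ∧ g ∉ N

/-- Amenability via Reiter's ℓ²-condition: almost-invariant unit vectors in `ℓ²(G)`. -/
def ReiterAmenable (G : Type*) [Group G] : Prop :=
  ∀ (F : Finset G) (ε : ℝ), 0 < ε →
    ∃ ξ : G → ℝ, Summable (fun x => ξ x ^ 2) ∧ (∑' x, ξ x ^ 2) = 1 ∧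
      ∀ g ∈ F, (∑' x, (ξ (g⁻¹ * x) - ξ x) ^ 2) ≤ ε ^ 2

/-- The Schreier metric on the coset space `G ⧸ H` with respect to a (symmetric) set `S`:
the least `m` such that `y = s_m ⋯ s_1 • x` with all `s_i ∈ S`. -/
noncomputable def schreierDist {G : Type*} [Group G] (S : Set G) (H : Subgroup G)
    (x y : G ⧸ H) : ℝ :=
  sInf {r : ℝ | ∃ m : ℕ, r = m ∧ ∃ w : Fin m → G, (∀ i, w i ∈ S) ∧
    (List.ofFn w).prod • x = y}

/-- The word length with respect to a generating set `S` (closed under inverses). -/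
noncomputable def wordLength {G : Type*} [Group G] (S : Set G) (g : G) : ℝ :=
  sInf {r : ℝ | ∃ m : ℕ, r = m ∧ ∃ w : Fin m → G, (∀ i, w i ∈ S) ∧
    (List.ofFn w).prod = g}

/-- The Cheeger constant of a finite `G`-set `V` with respect to `S ⊆ G`:
`min {|∂_S A| / |A| : A ⊆ V nonempty, 2|A| ≤ |V|}`, where
`∂_S A = {(v, s) ∈ A × S : s • v ∉ A}`. -/
noncomputable def cheegerConst {G : Type*} [Group G] (S : Finset G)
    (V : Type*) [MulAction G V] : ℝ :=
  sInf {r : ℝ | ∃ A : Set V, A.Nonempty ∧ 2 * A.ncard ≤ Nat.card V ∧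
    r = (Set.ncard {p : V × G | p.1 ∈ A ∧ p.2 ∈ (S : Set G) ∧ p.2 • p.1 ∉ A} : ℝ) / A.ncard}

/-- Equi-exactness (uniform exactness) of a family of spaces: uniformly bounded,
uniformly Lipschitz partitions of unity. -/
def EquiExact {J : Type*} (X : J → Type*) (d : ∀ j, X j → X j → ℝ) : Prop :=
  ∀ R > (0:ℝ), ∀ ε > (0:ℝ), ∃ C > (0:ℝ), ∀ j, ∃ (I : Type) (φ : I → X j → ℝ),
    (∀ i x, 0 ≤ φ i x ∧ φ i x ≤ 1) ∧
    (∀ x, HasSum (fun i => φ i x) 1) ∧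
    (∀ x y, d j x y ≤ R → ∃ s ≤ ε, HasSum (fun i => |φ i x - φ i y|) s) ∧
    (∀ i x y, φ i x ≠ 0 → φ i y ≠ 0 → d j x y ≤ C)

/-- The distance between `N`-orbits in `X`: `d(N·x, N·y) = inf {d(h•x, h'•y) : h, h' ∈ N}`. -/
noncomputable def orbDist {G X : Type*} [Group G] [MulAction G X] [MetricSpace X]
    (N : Subgroup G) (x y : X) : ℝ :=
  sInf {r : ℝ | ∃ h h' : G, h ∈ N ∧ h' ∈ N ∧ dist (h • x) (h' • y) = r}

/-- A `G`-equivariant coarse embedding `g ↦ g • x₀` of `(G, ℓ)` into a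
proper metric space with a free, properly discontinuous, isometric `G`-action descends,
uniformly in `n`, to coarse embeddings of the quotients `G ⧸ N_n` into the orbit spaces
`X / N_n`. -/
theorem statement5 {G X : Type*} [Group G] [MetricSpace X] [ProperSpace X] [MulAction G X]
    (ℓ : G → ℝ) (hℓ : IsProperLength ℓ)
    (hiso : ∀ g : G, Isometry (fun x : X => g • x))
    (hfree : ∀ (g : G) (x : X), g • x = x → g = 1)
    (hpd : ∀ B : Set X, Bornology.IsBounded B →
      {g : G | ((g • ·) '' B ∩ B).Nonempty}.Finite)
    (x₀ : X) (ρm ρp : ℝ → ℝ) (hρm : Monotone ρm) (hρp : Monotone ρp)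
    (hρmt : Filter.Tendsto ρm Filter.atTop Filter.atTop)
    (hce : ∀ g h : G, ρm (ℓ (g⁻¹ * h)) ≤ dist (g • x₀) (h • x₀) ∧
      dist (g • x₀) (h • x₀) ≤ ρp (ℓ (g⁻¹ * h)))
    (N : ℕ → Subgroup G) (hN : ∀ n, (N n).Normal) (hNint : (⨅ n, N n) = ⊥) :
    ∃ ρm' ρp' : ℝ → ℝ, Monotone ρm' ∧ Monotone ρp' ∧
      Filter.Tendsto ρm' Filter.atTop Filter.atTop ∧
      ∀ (n : ℕ) (g h : G),
        ρm' (quotDist ℓ (N n) (QuotientGroup.mk g) (QuotientGroup.mk h)) ≤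
            orbDist (N n) (g • x₀) (h • x₀) ∧
          orbDist (N n) (g • x₀) (h • x₀) ≤
            ρp' (quotDist ℓ (N n) (QuotientGroup.mk g) (QuotientGroup.mk h)) := by
  obtain ⟨hlen, hprop⟩ := hℓ
  refine ⟨ρm, ρp, hρm, hρp, hρmt, ?_⟩
  intro n g h
  have hmk : ∀ k a : G, k ∈ N n → (QuotientGroup.mk (k * a) : G ⧸ N n) = QuotientGroup.mk a := by
    intro k a hk
    rw [QuotientGroup.eq]
    have hrw : (k * a)⁻¹ * a = a⁻¹ * k⁻¹ * (a⁻¹)⁻¹ := by group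
    rw [hrw]
    exact (hN n).conj_mem k⁻¹ (inv_mem hk) a⁻¹
  have hmk2 : ∀ a b : G, (QuotientGroup.mk a : G ⧸ N n) = QuotientGroup.mk b →
      ∃ k ∈ N n, a = k * b := by
    intro a b hab
    have hm : a⁻¹ * b ∈ N n := QuotientGroup.eq.mp hab
    refine ⟨a * b⁻¹, ?_, by group⟩
    have h1 := (hN n).conj_mem _ hm b
    have h2 := inv_mem h1
    have hrw : a * b⁻¹ = (b * (a⁻¹ * b) * b⁻¹)⁻¹ := by group
    rw [hrw]
    exact h2
  set Sl : Set ℝ := {r : ℝ | ∃ a b : G,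
    QuotientGroup.mk a = (QuotientGroup.mk g : G ⧸ N n) ∧
    QuotientGroup.mk b = (QuotientGroup.mk h : G ⧸ N n) ∧ ℓ (a⁻¹ * b) = r} with hSl
  set Sd : Set ℝ := {r : ℝ | ∃ k k' : G, k ∈ N n ∧ k' ∈ N n ∧
    dist (k • (g • x₀)) (k' • (h • x₀)) = r} with hSd
  have hquot : quotDist ℓ (N n) (QuotientGroup.mk g) (QuotientGroup.mk h) = sInf Sl := rfl
  have horb : orbDist (N n) (g • x₀) (h • x₀) = sInf Sd := rfl
  have hSl_ne : Sl.Nonempty := ⟨ℓ (g⁻¹ * h), g, h, rfl, rfl, rfl⟩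
  have hSl_bdd : BddBelow Sl := ⟨0, by rintro r ⟨a, b, -, -, rfl⟩; exact hlen.nonneg _⟩
  have hSd_ne : Sd.Nonempty := ⟨_, 1, 1, (N n).one_mem, (N n).one_mem, rfl⟩
  have hSd_bdd : BddBelow Sd := ⟨0, by rintro r ⟨k, k', -, -, rfl⟩; exact dist_nonneg⟩
  -- the infimum of Sl is attained, by properness of ℓ
  set R := ℓ (g⁻¹ * h) with hR
  set T := Sl ∩ Set.Iic R with hT
  have hTfin : T.Finite := by
    apply Set.Finite.subset ((hprop R).image ℓ)
    rintro r ⟨⟨a, b, -, -, rfl⟩, hr⟩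
    exact ⟨a⁻¹ * b, hr, rfl⟩
  have hTne : T.Nonempty := ⟨R, ⟨g, h, rfl, rfl, rfl⟩, le_refl R⟩
  have hmem := hTne.csInf_mem hTfin
  obtain ⟨⟨a₀, b₀, ha₀, hb₀, hab₀⟩, hle₀⟩ := hmem
  have hmin : ∀ s ∈ Sl, sInf T ≤ s := by
    intro s hs
    by_cases hsR : s ≤ R
    · exact csInf_le hTfin.bddBelow ⟨hs, hsR⟩
    · exact le_trans hle₀ (le_of_not_ge hsR)
  have hInfl : sInf T ≤ sInf Sl := le_csInf hSl_ne hmin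
  constructor
  · -- lower bound
    rw [hquot, horb]
    apply le_csInf hSd_ne
    rintro r ⟨k, k', hk, hk', rfl⟩
    have hmem' : ℓ ((k * g)⁻¹ * (k' * h)) ∈ Sl :=
      ⟨k * g, k' * h, hmk k g hk, hmk k' h hk', rfl⟩
    calc ρm (sInf Sl) ≤ ρm (ℓ ((k * g)⁻¹ * (k' * h))) := hρm (csInf_le hSl_bdd hmem')
      _ ≤ dist ((k * g) • x₀) ((k' * h) • x₀) := (hce _ _).1
      _ = dist (k • (g • x₀)) (k' • (h • x₀)) := by rw [mul_smul, mul_smul]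
  · -- upper bound
    rw [hquot, horb]
    obtain ⟨k, hk, hkeq⟩ := hmk2 a₀ g ha₀
    obtain ⟨k', hk', hkeq'⟩ := hmk2 b₀ h hb₀
    have hmemd : dist (k • (g • x₀)) (k' • (h • x₀)) ∈ Sd := ⟨k, k', hk, hk', rfl⟩
    calc sInf Sd ≤ dist (k • (g • x₀)) (k' • (h • x₀)) := csInf_le hSd_bdd hmemd
      _ = dist (a₀ • x₀) (b₀ • x₀) := by rw [hkeq, hkeq', mul_smul, mul_smul]
      _ ≤ ρp (ℓ (a₀⁻¹ * b₀)) := (hce a₀ b₀).2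
      _ = ρp (sInf T) := by rw [hab₀]
      _ ≤ ρp (sInf Sl) := hρp hInfl
end

section
/- Let G be a group, let ℓ₁ and ℓ₂ be two proper length functions on G, and let (N_n)_{n∈ℕ} be a sequence of finite-index normal subgroups of G with trivial intersection. Then there exist nondecreasing functions ρ₋, ρ₊ : [0,∞) → [0,∞) with ρ₋(t) → ∞, depending only on ℓ₁ and ℓ₂ (not on n), such that for every n and every coset ḡ ∈ G/N_n, ρ₋(ℓ̄₁(ḡ)) ≤ ℓ̄₂(ḡ) ≤ ρ₊(ℓ̄₁(ḡ)), where ℓ̄ᵢ denotes the quotient length on G/N_n induced by ℓᵢ. In particular the two box space metric structures are coarsely equivalent. -/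
section AuxStatement6
variable {G : Type*} [Group G]

lemma quotLength_bddBelow' (ℓ : G → ℝ) (hnn : ∀ g, 0 ≤ ℓ g) (N : Subgroup G) (x : G ⧸ N) :
    BddBelow {r : ℝ | ∃ g : G, QuotientGroup.mk g = x ∧ ℓ g = r} :=
  ⟨0, by rintro r ⟨g, -, rfl⟩; exact hnn g⟩

lemma quotLength_le' (ℓ : G → ℝ) (hnn : ∀ g, 0 ≤ ℓ g) (N : Subgroup G) (g : G) :
    quotLength ℓ N (QuotientGroup.mk g) ≤ ℓ g :=
  csInf_le (quotLength_bddBelow' ℓ hnn N _) ⟨g, rfl, rfl⟩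

lemma le_quotLength' (ℓ : G → ℝ) (N : Subgroup G) (x : G ⧸ N) (b : ℝ)
    (hb : ∀ g : G, QuotientGroup.mk g = x → b ≤ ℓ g) :
    b ≤ quotLength ℓ N x := by
  obtain ⟨g₀, rfl⟩ := QuotientGroup.mk_surjective x
  exact le_csInf ⟨ℓ g₀, g₀, rfl, rfl⟩ (by rintro r ⟨g, hg, rfl⟩; exact hb g hg)

/-- For a proper length function the quotient length infimum is attained. -/
lemma quotLength_attained' (ℓ : G → ℝ) (h : IsProperLength ℓ) (N : Subgroup G) (x : G ⧸ N) :
    ∃ g : G, QuotientGroup.mk g = x ∧ ℓ g = quotLength ℓ N x := by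
  obtain ⟨hl, hp⟩ := h
  set t := quotLength ℓ N x with ht
  have hne : {r : ℝ | ∃ g : G, QuotientGroup.mk g = x ∧ ℓ g = r}.Nonempty := by
    obtain ⟨g₀, rfl⟩ := QuotientGroup.mk_surjective x
    exact ⟨ℓ g₀, g₀, rfl, rfl⟩
  have hlt : sInf {r : ℝ | ∃ g : G, QuotientGroup.mk g = x ∧ ℓ g = r} < t + 1 := by
    show quotLength ℓ N x < t + 1
    rw [← ht]; linarith
  obtain ⟨r, ⟨g₁, hg₁, rfl⟩, hr⟩ := exists_lt_of_csInf_lt hne hlt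
  set F : Set G := {g : G | QuotientGroup.mk g = x} ∩ {g : G | ℓ g ≤ t + 1} with hF
  have hFfin : F.Finite := (hp (t + 1)).subset Set.inter_subset_right
  have hFne : F.Nonempty := ⟨g₁, hg₁, le_of_lt hr⟩
  obtain ⟨g₀, hg₀F, hmin⟩ := Set.exists_min_image F ℓ hFfin hFne
  refine ⟨g₀, hg₀F.1, le_antisymm ?_ ?_⟩
  · refine le_quotLength' ℓ N x (ℓ g₀) fun g hg => ?_
    by_cases hle : ℓ g ≤ t + 1
    · exact hmin g ⟨hg, hle⟩
    · exact le_trans hg₀F.2 (le_of_not_ge hle)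
  · rw [ht, ← hg₀F.1]
    exact quotLength_le' ℓ hl.nonneg N g₀

end AuxStatement6

/-- Two proper length functions on `G` induce, uniformly in `n`, coarsely
equivalent quotient lengths on the quotients `G ⧸ N_n` of a box space. -/
theorem statement6 {G : Type*} [Group G] (ℓ₁ ℓ₂ : G → ℝ)
    (h₁ : IsProperLength ℓ₁) (h₂ : IsProperLength ℓ₂)
    (N : ℕ → Subgroup G) (hN : ∀ n, (N n).Normal)
    (hNfi : ∀ n, (N n).FiniteIndex) (hNint : (⨅ n, N n) = ⊥) :
    ∃ ρm ρp : ℝ → ℝ, Monotone ρm ∧ Monotone ρp ∧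
      Filter.Tendsto ρm Filter.atTop Filter.atTop ∧
      ∀ (n : ℕ) (x : G ⧸ N n),
        ρm (quotLength ℓ₁ (N n) x) ≤ quotLength ℓ₂ (N n) x ∧
        quotLength ℓ₂ (N n) x ≤ ρp (quotLength ℓ₁ (N n) x) := by
  obtain ⟨hl₁, hp₁⟩ := h₁
  have hnn₁ := hl₁.nonneg
  have hnn₂ := h₂.1.nonneg
  set A : ℝ → Set ℝ := fun t => (ℓ₂ '' {g | t ≤ ℓ₁ g}) ∪ {t} with hAdef
  set B : ℝ → Set ℝ := fun t => (ℓ₂ '' {g | ℓ₁ g ≤ t}) ∪ {0} with hBdef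
  have hAne : ∀ t, (A t).Nonempty := fun t => ⟨t, Or.inr rfl⟩
  have hAbdd : ∀ t, BddBelow (A t) := by
    intro t
    refine ⟨min 0 t, ?_⟩
    rintro r (⟨g, -, rfl⟩ | rfl)
    · exact le_trans (min_le_left _ _) (hnn₂ g)
    · exact min_le_right _ _
  have hBfin : ∀ t, (B t).Finite := fun t =>
    ((hp₁ t).image ℓ₂).union (Set.finite_singleton 0)
  have hBne : ∀ t, (B t).Nonempty := fun t => ⟨0, Or.inr rfl⟩
  refine ⟨fun t => sInf (A t), fun t => sSup (B t), ?_, ?_, ?_, ?_⟩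
  · -- ρm monotone
    intro s t hst
    refine le_csInf (hAne t) ?_
    rintro r (⟨g, hg, rfl⟩ | rfl)
    · exact csInf_le (hAbdd s) (Or.inl ⟨g, le_trans hst hg, rfl⟩)
    · exact le_trans (csInf_le (hAbdd s) (Or.inr rfl)) hst
  · -- ρp monotone
    intro s t hst
    refine csSup_le_csSup (hBfin t).bddAbove (hBne s) ?_
    rintro r (⟨g, hg, rfl⟩ | rfl)
    · exact Or.inl ⟨g, le_trans hg hst, rfl⟩
    · exact Or.inr rfl
  · -- ρm → ∞
    rw [Filter.tendsto_atTop]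
    intro M
    obtain ⟨T, hT⟩ := ((h₂.2 M).image ℓ₁).bddAbove
    rw [Filter.eventually_atTop]
    refine ⟨max (T + 1) M, fun t ht => ?_⟩
    have htT : T + 1 ≤ t := le_trans (le_max_left _ _) ht
    have htM : M ≤ t := le_trans (le_max_right _ _) ht
    refine le_csInf (hAne t) ?_
    rintro r (⟨g, hg, rfl⟩ | rfl)
    · by_contra hcon
      push_neg at hcon
      have : ℓ₁ g ≤ T := hT ⟨g, le_of_lt hcon, rfl⟩
      simp only [Set.mem_setOf_eq] at hg
      linarith
    · exact htM
  · -- the two inequalities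
    intro n x
    set t := quotLength ℓ₁ (N n) x with htdef
    constructor
    · -- lower bound
      refine le_quotLength' ℓ₂ (N n) x _ fun g hg => ?_
      have h1 : t ≤ ℓ₁ g := by rw [htdef, ← hg]; exact quotLength_le' ℓ₁ hnn₁ (N n) g
      exact csInf_le (hAbdd t) (Or.inl ⟨g, h1, rfl⟩)
    · -- upper bound: take a representative attaining the ℓ₁-infimum
      obtain ⟨g₀, hg₀, hℓg₀⟩ := quotLength_attained' ℓ₁ ⟨hl₁, hp₁⟩ (N n) x
      calc quotLength ℓ₂ (N n) x ≤ ℓ₂ g₀ := by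
              rw [← hg₀]; exact quotLength_le' ℓ₂ hnn₂ (N n) g₀
        _ ≤ sSup (B t) :=
              le_csSup (hBfin t).bddAbove (Or.inl ⟨g₀, le_of_eq hℓg₀, rfl⟩)
end

section
/- Let A and B be groups and let π : A ∗ B → Q be a surjective group homomorphism. Set K_A = ker(π ∘ ι_A) ⊴ A and K_B = ker(π ∘ ι_B) ⊴ B, and let q : A ∗ B → (A/K_A) ∗ (B/K_B) be the homomorphism induced by the two quotient maps. Then there is a unique homomorphism π̄ : (A/K_A) ∗ (B/K_B) → Q with π̄ ∘ q = π; this π̄ is surjective and restricts injectively to the canonical copies of A/K_A and B/K_B; the kernel of π̄ is a free group; and if Q is finite, then A/K_A and B/K_B are finite groups and ker(π̄) is a free group of finite rank (in particular finitely generated). -/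
noncomputable section
open CategoryTheory CategoryTheory.ActionCategory CategoryTheory.SingleObj Quiver
open Monoid Function

namespace Stmt9

/-! ### Generic machinery for a free action given as a hom to `Equiv.Perm S`. -/

section FreeAction

variable {S C : Type*} [Group C] (σ : C →* Equiv.Perm S)

def orbSetoid : Setoid S :=
  ⟨fun s t => ∃ c : C, σ c s = t,
   fun s => ⟨1, by simp⟩,
   fun ⟨c, hc⟩ => ⟨c⁻¹, by simp [← hc]⟩,
   fun ⟨c, hc⟩ ⟨d, hd⟩ => ⟨d * c, by simp [← hc, ← hd]⟩⟩

def rep (s : S) : S := (Quotient.mk (orbSetoid σ) s).out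

lemma rep_spec (s : S) : ∃ c : C, σ c (rep σ s) = s :=
  Quotient.mk_out (s := orbSetoid σ) s

lemma rep_eq_of_rel {s t : S} (c : C) (h : σ c s = t) : rep σ s = rep σ t :=
  congrArg Quotient.out (Quotient.sound ⟨c, h⟩)

lemma rep_smul (c : C) (s : S) : rep σ (σ c s) = rep σ s :=
  (rep_eq_of_rel σ c rfl).symm

lemma rep_idem (s : S) : rep σ (rep σ s) = rep σ s :=
  congrArg Quotient.out (Quotient.out_eq _)

variable (hσ : ∀ (c : C) (s : S), σ c s = s → c = 1)

def elem (s : S) : C := (rep_spec σ s).choose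

lemma elem_spec (s : S) : σ (elem σ s) (rep σ s) = s :=
  (rep_spec σ s).choose_spec

include hσ in
lemma elem_unique {s : S} {c : C} (h : σ c (rep σ s) = s) : c = elem σ s := by
  have h2 := elem_spec σ s
  have h3 : σ ((elem σ s)⁻¹ * c) (rep σ s) = rep σ s := by
    rw [map_mul]
    simp only [Equiv.Perm.mul_apply, h]
    rw [map_inv, Equiv.Perm.inv_eq_iff_eq]
    exact h2.symm
  have h4 := hσ _ _ h3
  rw [inv_mul_eq_one] at h4
  exact h4.symm

include hσ in
lemma elem_smul (c : C) (s : S) : elem σ (σ c s) = c * elem σ s := by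
  refine (elem_unique σ hσ ?_).symm
  rw [rep_smul, map_mul]
  simp [elem_spec σ s]

include hσ in
lemma elem_of_rep {s : S} (h : rep σ s = s) : elem σ s = 1 :=
  (elem_unique σ hσ (c := 1) (by rw [map_one]; rw [h]; rfl)).symm

variable {X : Type*} [Group X] (v : S → C → X)

def coc (c : C) (s : S) : X :=
  v (rep σ s) (c * elem σ s) * (v (rep σ s) (elem σ s))⁻¹

lemma coc_one (s : S) : coc σ v 1 s = 1 := by
  unfold coc
  rw [one_mul, mul_inv_cancel]

include hσ in
lemma coc_mul (c c' : C) (s : S) :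
    coc σ v (c * c') s = coc σ v c (σ c' s) * coc σ v c' s := by
  unfold coc
  rw [rep_smul, elem_smul σ hσ, mul_assoc]
  group

include hσ in
lemma coc_at_rep {s : S} (c : C) (h : rep σ s = s) (hv1 : v s 1 = 1) :
    coc σ v c s = v s c := by
  unfold coc
  rw [elem_of_rep σ hσ h, h, mul_one, hv1, inv_one, mul_one]

end FreeAction

end Stmt9

namespace Stmt9

section Groupoid

variable {A B S : Type*} [Group A] [Group B] [MulAction (Monoid.Coprod A B) S]

variable (A B S) in
def σA : A →* Equiv.Perm S := (MulAction.toPermHom (Coprod A B) S).comp Coprod.inl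

variable (A B S) in
def σB : B →* Equiv.Perm S := (MulAction.toPermHom (Coprod A B) S).comp Coprod.inr

lemma σA_apply (a : A) (s : S) : σA A B S a s = (Coprod.inl a : Coprod A B) • s := rfl

lemma σB_apply (b : B) (s : S) : σB A B S b s = (Coprod.inr b : Coprod A B) • s := rfl

variable (A B S) in
/-- The generating quiver: for each `A`-orbit (resp. `B`-orbit) representative `r` and each
nontrivial `a : A`, an arrow `r ⟶ a • r`. -/
abbrev genHom (x y : ActionCategory (Coprod A B) S) : Type _ :=
  {a : A // rep (σA A B S) x.back = x.back ∧ a ≠ 1 ∧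
      (Coprod.inl a : Coprod A B) • x.back = y.back} ⊕
  {b : B // rep (σB A B S) x.back = x.back ∧ b ≠ 1 ∧
      (Coprod.inr b : Coprod A B) • x.back = y.back}

variable (A B S) in
def genOf : ∀ {x y : ActionCategory (Coprod A B) S}, genHom A B S x y → (x ⟶ y)
  | _, _, Sum.inl p => ⟨Coprod.inl p.1, p.2.2.2⟩
  | _, _, Sum.inr p => ⟨Coprod.inr p.1, p.2.2.2⟩

variable (A B) in
def toObj (s : S) : ActionCategory (Coprod A B) S := ⟨(), s⟩

variable (A B) in
def homMk {s t : S} (g : Coprod A B) (h : g • s = t) : toObj A B s ⟶ toObj A B t :=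
  Subtype.mk g h

lemma homMk_comp {s t u : S} (g g' : Coprod A B) (h : g • s = t) (h' : g' • t = u) :
    homMk A B g h ≫ homMk A B g' h' = homMk A B (g' * g) (by rw [mul_smul, h, h']) :=
  rfl

variable {X : Type*} [Group X]
variable (f : ∀ x y : ActionCategory (Coprod A B) S, genHom A B S x y → X)

open scoped Classical in
def vA (s : S) (a : A) : X :=
  if h : rep (σA A B S) s = s ∧ a ≠ 1 then
    f ⟨(), s⟩ ⟨(), (Coprod.inl a : Coprod A B) • s⟩ (Sum.inl ⟨a, h.1, h.2, rfl⟩) else 1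

open scoped Classical in
def vB (s : S) (b : B) : X :=
  if h : rep (σB A B S) s = s ∧ b ≠ 1 then
    f ⟨(), s⟩ ⟨(), (Coprod.inr b : Coprod A B) • s⟩ (Sum.inr ⟨b, h.1, h.2, rfl⟩) else 1

variable (hA : ∀ (a : A) (s : S), (Coprod.inl a : Coprod A B) • s = s → a = 1)
variable (hB : ∀ (b : B) (s : S), (Coprod.inr b : Coprod A B) • s = s → b = 1)

include hA in
lemma phiA_aux (a a' : A) (s : S) :
    coc (σA A B S) (vA f) (a * a') s =
      coc (σA A B S) (vA f) a ((Coprod.inl a' : Coprod A B) • s) *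
        coc (σA A B S) (vA f) a' s :=
  coc_mul (σA A B S) hA (vA f) a a' s

include hB in
lemma phiB_aux (b b' : B) (s : S) :
    coc (σB A B S) (vB f) (b * b') s =
      coc (σB A B S) (vB f) b ((Coprod.inr b' : Coprod A B) • s) *
        coc (σB A B S) (vB f) b' s :=
  coc_mul (σB A B S) hB (vB f) b b' s

include hA in
def PhiA : A →* (S → X) ⋊[mulAutArrow] Coprod A B where
  toFun a := ⟨fun s => coc (σA A B S) (vA f) a ((Coprod.inl a : Coprod A B)⁻¹ • s),
    Coprod.inl a⟩
  map_one' := SemidirectProduct.ext (funext fun s => coc_one _ _ _) (map_one _)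
  map_mul' a a' := SemidirectProduct.ext (funext fun s => by
      show coc (σA A B S) (vA f) (a * a') ((Coprod.inl (a * a') : Coprod A B)⁻¹ • s) = _
      rw [phiA_aux f hA]
      show _ = _ * mulAutArrow (M := X) (Coprod.inl a : Coprod A B) _ s
      rw [mulAutArrow_apply_apply]
      congr 2 <;> rw [map_mul, mul_inv_rev, mul_smul] <;> simp) (map_mul _ _ _)

def PhiB : B →* (S → X) ⋊[mulAutArrow] Coprod A B where
  toFun b := ⟨fun s => coc (σB A B S) (vB f) b ((Coprod.inr b : Coprod A B)⁻¹ • s),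
    Coprod.inr b⟩
  map_one' := SemidirectProduct.ext (funext fun s => coc_one _ _ _) (map_one _)
  map_mul' b b' := SemidirectProduct.ext (funext fun s => by
      show coc (σB A B S) (vB f) (b * b') ((Coprod.inr (b * b') : Coprod A B)⁻¹ • s) = _
      rw [phiB_aux f hB]
      show _ = _ * mulAutArrow (M := X) (Coprod.inr b : Coprod A B) _ s
      rw [mulAutArrow_apply_apply]
      congr 2 <;> rw [map_mul, mul_inv_rev, mul_smul] <;> simp) (map_mul _ _ _)

include hA hB in
def Phi : Coprod A B →* (S → X) ⋊[mulAutArrow] Coprod A B :=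
  Coprod.lift (PhiA f hA) (PhiB f hB)

include hA hB in
lemma Phi_sane (g : Coprod A B) : (Phi f hA hB g).right = g := by
  have h : SemidirectProduct.rightHom.comp (Phi f hA hB) = MonoidHom.id (Coprod A B) := by
    apply Coprod.hom_ext <;> (ext x; rfl)
  exact DFunLike.congr_fun h g

lemma vA_one (s : S) : vA f s (1 : A) = 1 := by
  rw [vA, dif_neg]
  rintro ⟨-, h⟩
  exact h rfl

lemma vB_one (s : S) : vB f s (1 : B) = 1 := by
  rw [vB, dif_neg]
  rintro ⟨-, h⟩
  exact h rfl

include hA hB in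
lemma F_map_genOf : ∀ {x y : ActionCategory (Coprod A B) S} (e : genHom A B S x y),
    (ActionCategory.uncurry (Phi f hA hB) (Phi_sane f hA hB)).map (genOf A B S e) = f x y e := by
  rintro ⟨⟨⟩, s⟩ ⟨⟨⟩, t⟩ (⟨a, h1, h2, h3⟩ | ⟨b, h1, h2, h3⟩)
  · show (Phi f hA hB (Coprod.inl a)).left t = _
    have hP : Phi f hA hB (Coprod.inl a) = PhiA f hA a := Coprod.lift_apply_inl _ _ _
    rw [hP]
    show coc (σA A B S) (vA f) a ((Coprod.inl a : Coprod A B)⁻¹ • (id t : S)) = _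
    have h3' : (Coprod.inl a : Coprod A B) • (id s : S) = (id t : S) := h3
    subst h3'
    simp only [id_eq]
    rw [inv_smul_smul]
    have h1' : rep (σA A B S) (id s : S) = (id s : S) := h1
    rw [coc_at_rep (σA A B S) hA (vA f) a h1' (vA_one f _)]
    rw [vA, dif_pos ⟨h1', h2⟩]
    rfl
  · show (Phi f hA hB (Coprod.inr b)).left t = _
    have hP : Phi f hA hB (Coprod.inr b) = PhiB f hB b := Coprod.lift_apply_inr _ _ _
    rw [hP]
    show coc (σB A B S) (vB f) b ((Coprod.inr b : Coprod A B)⁻¹ • (id t : S)) = _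
    have h3' : (Coprod.inr b : Coprod A B) • (id s : S) = (id t : S) := h3
    subst h3'
    simp only [id_eq]
    rw [inv_smul_smul]
    have h1' : rep (σB A B S) (id s : S) = (id s : S) := h1
    rw [coc_at_rep (σB A B S) hB (vB f) b h1' (vB_one f _)]
    rw [vB, dif_pos ⟨h1', h2⟩]
    rfl

include hA hB in
lemma curry_eq_Phi (E : ActionCategory (Coprod A B) S ⥤ CategoryTheory.SingleObj X)
    (hE : ∀ {x y : ActionCategory (Coprod A B) S} (e : genHom A B S x y),
      E.map (genOf A B S e) = f x y e) :
    ActionCategory.curry E = Phi f hA hB := by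
  have E_genA : ∀ (r t : S) (c : A) (hr : rep (σA A B S) r = r)
      (h : (Coprod.inl c : Coprod A B) • r = t),
      E.map (homMk A B (Coprod.inl c) h) = vA f r c := by
    intro r t c hr h
    by_cases hc : c = 1
    · subst hc
      have ht : t = r := by rw [← h, map_one, one_smul]
      subst ht
      have hm : homMk A B (Coprod.inl (1 : A)) h = 𝟙 (toObj A B t) :=
        Subtype.ext (by show (Coprod.inl (1 : A) : Coprod A B) = 1; exact map_one _)
      rw [hm, E.map_id, id_as_one, vA_one]
    · subst h
      have h5 := hE (x := toObj A B r) (y := toObj A B ((Coprod.inl c : Coprod A B) • r))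
        (Sum.inl ⟨c, hr, hc, rfl⟩)
      rw [vA, dif_pos ⟨hr, hc⟩]
      exact h5
  have E_genB : ∀ (r t : S) (c : B) (hr : rep (σB A B S) r = r)
      (h : (Coprod.inr c : Coprod A B) • r = t),
      E.map (homMk A B (Coprod.inr c) h) = vB f r c := by
    intro r t c hr h
    by_cases hc : c = 1
    · subst hc
      have ht : t = r := by rw [← h, map_one, one_smul]
      subst ht
      have hm : homMk A B (Coprod.inr (1 : B)) h = 𝟙 (toObj A B t) :=
        Subtype.ext (by show (Coprod.inr (1 : B) : Coprod A B) = 1; exact map_one _)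
      rw [hm, E.map_id, id_as_one, vB_one]
    · subst h
      have h5 := hE (x := toObj A B r) (y := toObj A B ((Coprod.inr c : Coprod A B) • r))
        (Sum.inr ⟨c, hr, hc, rfl⟩)
      rw [vB, dif_pos ⟨hr, hc⟩]
      exact h5
  have E_singleA : ∀ (s t : S) (c : A) (h : (Coprod.inl c : Coprod A B) • s = t),
      E.map (homMk A B (Coprod.inl c) h) = coc (σA A B S) (vA f) c s := by
    intro s t c h
    subst h
    have hr : rep (σA A B S) (rep (σA A B S) s) = rep (σA A B S) s := rep_idem _ _
    have he : (Coprod.inl (elem (σA A B S) s) : Coprod A B) • rep (σA A B S) s = s :=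
      elem_spec (σA A B S) s
    have hq : (Coprod.inl (c * elem (σA A B S) s) : Coprod A B) • rep (σA A B S) s =
        (Coprod.inl c : Coprod A B) • s := by rw [map_mul, mul_smul, he]
    have hp' : ((Coprod.inl (elem (σA A B S) s) : Coprod A B))⁻¹ • s = rep (σA A B S) s := by
      rw [inv_smul_eq_iff]; exact he.symm
    have hm : homMk A B (S := S) (Coprod.inl c) rfl =
        homMk A B (Coprod.inl (elem (σA A B S) s))⁻¹ hp' ≫ homMk A B _ hq :=
      Subtype.ext (by
        show (Coprod.inl c : Coprod A B) =
          (Coprod.inl (c * elem (σA A B S) s) : Coprod A B) * (Coprod.inl (elem (σA A B S) s))⁻¹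
        rw [map_mul, mul_assoc, mul_inv_cancel, mul_one])
    have hpp' : homMk A B (S := S) (Coprod.inl (elem (σA A B S) s))⁻¹ hp' ≫
        homMk A B _ he = 𝟙 _ :=
      Subtype.ext (by
        show (Coprod.inl (elem (σA A B S) s) : Coprod A B) *
          (Coprod.inl (elem (σA A B S) s))⁻¹ = 1
        rw [mul_inv_cancel])
    have hmapp' : E.map (homMk A B (S := S) (Coprod.inl (elem (σA A B S) s))⁻¹ hp') =
        (E.map (homMk A B _ he))⁻¹ := by
      have h1 : E.map (homMk A B (S := S) _ he) *
          E.map (homMk A B (Coprod.inl (elem (σA A B S) s))⁻¹ hp') = 1 := by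
        rw [← comp_as_mul, ← E.map_comp, hpp', E.map_id, id_as_one]
      exact (inv_eq_of_mul_eq_one_right h1).symm
    rw [hm, E.map_comp, comp_as_mul, hmapp']
    rw [E_genA _ _ _ hr he, E_genA _ _ _ hr hq]
    rfl
  have E_singleB : ∀ (s t : S) (c : B) (h : (Coprod.inr c : Coprod A B) • s = t),
      E.map (homMk A B (Coprod.inr c) h) = coc (σB A B S) (vB f) c s := by
    intro s t c h
    subst h
    have hr : rep (σB A B S) (rep (σB A B S) s) = rep (σB A B S) s := rep_idem _ _
    have he : (Coprod.inr (elem (σB A B S) s) : Coprod A B) • rep (σB A B S) s = s :=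
      elem_spec (σB A B S) s
    have hq : (Coprod.inr (c * elem (σB A B S) s) : Coprod A B) • rep (σB A B S) s =
        (Coprod.inr c : Coprod A B) • s := by rw [map_mul, mul_smul, he]
    have hp' : ((Coprod.inr (elem (σB A B S) s) : Coprod A B))⁻¹ • s = rep (σB A B S) s := by
      rw [inv_smul_eq_iff]; exact he.symm
    have hm : homMk A B (S := S) (Coprod.inr c) rfl =
        homMk A B (Coprod.inr (elem (σB A B S) s))⁻¹ hp' ≫ homMk A B _ hq :=
      Subtype.ext (by
        show (Coprod.inr c : Coprod A B) =
          (Coprod.inr (c * elem (σB A B S) s) : Coprod A B) * (Coprod.inr (elem (σB A B S) s))⁻¹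
        rw [map_mul, mul_assoc, mul_inv_cancel, mul_one])
    have hpp' : homMk A B (S := S) (Coprod.inr (elem (σB A B S) s))⁻¹ hp' ≫
        homMk A B _ he = 𝟙 _ :=
      Subtype.ext (by
        show (Coprod.inr (elem (σB A B S) s) : Coprod A B) *
          (Coprod.inr (elem (σB A B S) s))⁻¹ = 1
        rw [mul_inv_cancel])
    have hmapp' : E.map (homMk A B (S := S) (Coprod.inr (elem (σB A B S) s))⁻¹ hp') =
        (E.map (homMk A B _ he))⁻¹ := by
      have h1 : E.map (homMk A B (S := S) _ he) *
          E.map (homMk A B (Coprod.inr (elem (σB A B S) s))⁻¹ hp') = 1 := by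
        rw [← comp_as_mul, ← E.map_comp, hpp', E.map_id, id_as_one]
      exact (inv_eq_of_mul_eq_one_right h1).symm
    rw [hm, E.map_comp, comp_as_mul, hmapp']
    rw [E_genB _ _ _ hr he, E_genB _ _ _ hr hq]
    rfl
  apply Coprod.hom_ext
  · apply MonoidHom.ext
    intro a
    refine SemidirectProduct.ext ?_ rfl
    funext b
    have h2 : Phi f hA hB (Coprod.inl a) = PhiA f hA a := Coprod.lift_apply_inl _ _ _
    show E.map (homOfPair b (Coprod.inl a)) = (Phi f hA hB (Coprod.inl a)).left b
    rw [h2]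
    exact E_singleA ((Coprod.inl a : Coprod A B)⁻¹ • b) b a (smul_inv_smul _ _)
  · apply MonoidHom.ext
    intro a
    refine SemidirectProduct.ext ?_ rfl
    funext b
    have h2 : Phi f hA hB (Coprod.inr a) = PhiB f hB a := Coprod.lift_apply_inr _ _ _
    show E.map (homOfPair b (Coprod.inr a)) = (Phi f hA hB (Coprod.inr a)).left b
    rw [h2]
    exact E_singleB ((Coprod.inr a : Coprod A B)⁻¹ • b) b a (smul_inv_smul _ _)

include hA hB in
def isFreeGroupoid_actionCategory :
    IsFreeGroupoid (ActionCategory (Coprod A B) S) where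
  quiverGenerators := ⟨fun x y => genHom A B S x y⟩
  of := fun e => genOf A B S e
  unique_lift := by
    intro X _ f
    let f' : ∀ x y : ActionCategory (Coprod A B) S, genHom A B S x y → X :=
      fun x y e => f e
    refine ⟨ActionCategory.uncurry (Phi f' hA hB) (Phi_sane f' hA hB), ?_, ?_⟩
    · intro x y g
      exact F_map_genOf f' hA hB g
    · intro E hE
      have hc : ActionCategory.curry E = Phi f' hA hB :=
        curry_eq_Phi f' hA hB E (fun {x y} e => hE x y e)
      apply Functor.hext
      · intro x
        apply Unit.ext
      · refine ActionCategory.cases ?_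
        intro t g
        have key : ∀ (P : Coprod A B →* (S → X) ⋊[mulAutArrow] Coprod A B)
            (hP : ∀ g, (P g).right = g), ActionCategory.curry E = P →
            HEq (E.map (homOfPair t g)) ((ActionCategory.uncurry P hP).map (homOfPair t g)) := by
          rintro P hP rfl
          rfl
        exact key _ _ hc

end Groupoid

end Stmt9

namespace Stmt9

theorem free_smul_fix {A B Q : Type*} [Group A] [Group B] [Group Q]
    (φ : Coprod A B →* Q) {g₀ : Coprod A B} (s : Coprod A B ⧸ φ.ker)
    (hs : g₀ • s = s) : φ g₀ = 1 := by
  induction s using QuotientGroup.induction_on with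
  | H g =>
    rw [MulAction.Quotient.smul_mk, QuotientGroup.eq] at hs
    have h3 : g₀⁻¹ ∈ φ.ker := by
      have h4 := (MonoidHom.normal_ker φ).conj_mem _ hs g
      simpa [mul_inv_rev, mul_assoc] using h4
    have h5 : φ g₀⁻¹ = 1 := h3
    rw [map_inv, inv_eq_one] at h5
    exact h5

theorem isFreeGroup_ker {A B Q : Type*} [Group A] [Group B] [Group Q]
    (φ : Coprod A B →* Q)
    (hA : Function.Injective (φ.comp Coprod.inl))
    (hB : Function.Injective (φ.comp Coprod.inr)) :
    IsFreeGroup φ.ker := by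
  have hfreeA : ∀ (a : A) (s : Coprod A B ⧸ φ.ker),
      (Coprod.inl a : Coprod A B) • s = s → a = 1 := fun a s hs =>
    hA (by rw [MonoidHom.comp_apply, free_smul_fix φ s hs]; rw [map_one])
  have hfreeB : ∀ (b : B) (s : Coprod A B ⧸ φ.ker),
      (Coprod.inr b : Coprod A B) • s = s → b = 1 := fun b s hs =>
    hB (by rw [MonoidHom.comp_apply, free_smul_fix φ s hs]; rw [map_one])
  haveI : IsFreeGroupoid (ActionCategory (Coprod A B) (Coprod A B ⧸ φ.ker)) :=
    isFreeGroupoid_actionCategory hfreeA hfreeB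
  let x : ActionCategory (Coprod A B) (Coprod A B ⧸ φ.ker) := objEquiv _ _ ↑(1 : Coprod A B)
  let e := endMulEquivSubgroup φ.ker
  have hc : IsConnected (ActionCategory (Coprod A B) (Coprod A B ⧸ φ.ker)) := inferInstance
  have hf := @IsFreeGroupoid.endIsFreeOfConnectedFree _ _ hc _ x
  exact @IsFreeGroup.ofMulEquiv _ (End.group x) hf _ _ (MulEquiv.mk' e.toEquiv (fun a b => e.map_mul a b))

end Stmt9

open Monoid in
theorem map_surjective' {M N M' N' : Type*} [Monoid M] [Monoid N] [Monoid M'] [Monoid N']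
    {f : M →* M'} {g : N →* N'} (hf : Function.Surjective f) (hg : Function.Surjective g) :
    Function.Surjective (Coprod.map f g) := by
  intro x
  induction x using Coprod.induction_on with
  | inl m =>
    obtain ⟨a, rfl⟩ := hf m
    exact ⟨Coprod.inl a, Coprod.map_apply_inl _ _ _⟩
  | inr n =>
    obtain ⟨b, rfl⟩ := hg n
    exact ⟨Coprod.inr b, Coprod.map_apply_inr _ _ _⟩
  | mul x y hx hy =>
    obtain ⟨x', rfl⟩ := hx
    obtain ⟨y', rfl⟩ := hy
    exact ⟨x' * y', map_mul _ _ _⟩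

theorem statement9' {A B Q : Type*} [Group A] [Group B] [Group Q]
    (π : Monoid.Coprod A B →* Q) (hπ : Function.Surjective π) :
    ∃ πbar : Monoid.Coprod (A ⧸ (π.comp Monoid.Coprod.inl).ker)
        (B ⧸ (π.comp Monoid.Coprod.inr).ker) →* Q,
      πbar.comp (Monoid.Coprod.map
        (QuotientGroup.mk' (π.comp Monoid.Coprod.inl).ker)
        (QuotientGroup.mk' (π.comp Monoid.Coprod.inr).ker)) = π ∧
      (∀ ψ : Monoid.Coprod (A ⧸ (π.comp Monoid.Coprod.inl).ker)
          (B ⧸ (π.comp Monoid.Coprod.inr).ker) →* Q,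
        ψ.comp (Monoid.Coprod.map
          (QuotientGroup.mk' (π.comp Monoid.Coprod.inl).ker)
          (QuotientGroup.mk' (π.comp Monoid.Coprod.inr).ker)) = π → ψ = πbar) ∧
      Function.Surjective πbar ∧
      Function.Injective (πbar.comp Monoid.Coprod.inl) ∧
      Function.Injective (πbar.comp Monoid.Coprod.inr) ∧
      IsFreeGroup πbar.ker ∧
      (Finite Q → Finite (A ⧸ (π.comp Monoid.Coprod.inl).ker) ∧
        Finite (B ⧸ (π.comp Monoid.Coprod.inr).ker) ∧ Group.FG πbar.ker) := by
  set q := Monoid.Coprod.map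
    (QuotientGroup.mk' (π.comp Monoid.Coprod.inl).ker)
    (QuotientGroup.mk' (π.comp Monoid.Coprod.inr).ker) with hqdef
  set πbar : Monoid.Coprod (A ⧸ (π.comp Monoid.Coprod.inl).ker)
      (B ⧸ (π.comp Monoid.Coprod.inr).ker) →* Q :=
    Monoid.Coprod.lift (QuotientGroup.kerLift (π.comp Monoid.Coprod.inl))
      (QuotientGroup.kerLift (π.comp Monoid.Coprod.inr)) with hpibar
  have hq_surj : Function.Surjective q :=
    map_surjective' (QuotientGroup.mk'_surjective _) (QuotientGroup.mk'_surjective _)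
  have hcomp : πbar.comp q = π := by
    apply Monoid.Coprod.hom_ext
    · apply MonoidHom.ext
      intro a
      show πbar (q (Monoid.Coprod.inl a)) = π (Monoid.Coprod.inl a)
      rw [hqdef]
      rw [Monoid.Coprod.map_apply_inl]
      rw [hpibar]
      rw [Monoid.Coprod.lift_apply_inl]
      exact QuotientGroup.kerLift_mk _ _
    · apply MonoidHom.ext
      intro b
      show πbar (q (Monoid.Coprod.inr b)) = π (Monoid.Coprod.inr b)
      rw [hqdef]
      rw [Monoid.Coprod.map_apply_inr]
      rw [hpibar]
      rw [Monoid.Coprod.lift_apply_inr]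
      exact QuotientGroup.kerLift_mk _ _
  have hbar_surj : Function.Surjective πbar := by
    intro y
    obtain ⟨x, hx⟩ := hπ y
    exact ⟨q x, by rw [← MonoidHom.comp_apply, hcomp, hx]⟩
  have hinjA : Function.Injective (πbar.comp Monoid.Coprod.inl) := by
    have h1 : πbar.comp Monoid.Coprod.inl =
        QuotientGroup.kerLift (π.comp Monoid.Coprod.inl) :=
      Monoid.Coprod.lift_comp_inl _ _
    rw [h1]
    exact QuotientGroup.kerLift_injective _
  have hinjB : Function.Injective (πbar.comp Monoid.Coprod.inr) := by
    have h1 : πbar.comp Monoid.Coprod.inr =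
        QuotientGroup.kerLift (π.comp Monoid.Coprod.inr) :=
      Monoid.Coprod.lift_comp_inr _ _
    rw [h1]
    exact QuotientGroup.kerLift_injective _
  refine ⟨πbar, hcomp, ?_, hbar_surj, hinjA, hinjB, ?_, ?_⟩
  · intro ψ hψ
    apply MonoidHom.ext
    intro x
    obtain ⟨y, rfl⟩ := hq_surj x
    rw [← MonoidHom.comp_apply, ← MonoidHom.comp_apply, hψ, hcomp]
  · exact Stmt9.isFreeGroup_ker πbar hinjA hinjB
  · intro hQ
    haveI := hQ
    haveI finA : Finite (A ⧸ (π.comp Monoid.Coprod.inl).ker) :=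
      Finite.of_injective _ (QuotientGroup.kerLift_injective (π.comp Monoid.Coprod.inl))
    haveI finB : Finite (B ⧸ (π.comp Monoid.Coprod.inr).ker) :=
      Finite.of_injective _ (QuotientGroup.kerLift_injective (π.comp Monoid.Coprod.inr))
    refine ⟨finA, finB, ?_⟩
    haveI : Group.FG (Monoid.Coprod (A ⧸ (π.comp Monoid.Coprod.inl).ker)
        (B ⧸ (π.comp Monoid.Coprod.inr).ker)) := by
      rw [Group.fg_iff]
      exact ⟨Set.range Monoid.Coprod.inl ∪ Set.range Monoid.Coprod.inr,
        Monoid.Coprod.closure_range_inl_union_inr,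
        (Set.finite_range _).union (Set.finite_range _)⟩
    haveI : Finite (Monoid.Coprod (A ⧸ (π.comp Monoid.Coprod.inl).ker)
        (B ⧸ (π.comp Monoid.Coprod.inr).ker) ⧸ πbar.ker) :=
      Finite.of_equiv Q (QuotientGroup.quotientKerEquivOfSurjective πbar hbar_surj).symm.toEquiv
    haveI : πbar.ker.FiniteIndex := Subgroup.finiteIndex_of_finite_quotient
    exact Subgroup.fg_of_index_ne_zero _

/-- Normal form for quotients of a free product: a surjection
`π : A ∗ B ↠ Q` factors uniquely through `(A/K_A) ∗ (B/K_B)` via a surjection `π̄` which is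
injective on the canonical copies of `A/K_A`, `B/K_B`, whose kernel is a free group; if `Q`
is finite then `A/K_A`, `B/K_B` are finite and `ker π̄` is free of finite rank. -/
theorem statement9 {A B Q : Type*} [Group A] [Group B] [Group Q]
    (π : Monoid.Coprod A B →* Q) (hπ : Function.Surjective π) :
    ∃ πbar : Monoid.Coprod (A ⧸ (π.comp Monoid.Coprod.inl).ker)
        (B ⧸ (π.comp Monoid.Coprod.inr).ker) →* Q,
      πbar.comp (Monoid.Coprod.map
        (QuotientGroup.mk' (π.comp Monoid.Coprod.inl).ker)
        (QuotientGroup.mk' (π.comp Monoid.Coprod.inr).ker)) = π ∧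
      (∀ ψ : Monoid.Coprod (A ⧸ (π.comp Monoid.Coprod.inl).ker)
          (B ⧸ (π.comp Monoid.Coprod.inr).ker) →* Q,
        ψ.comp (Monoid.Coprod.map
          (QuotientGroup.mk' (π.comp Monoid.Coprod.inl).ker)
          (QuotientGroup.mk' (π.comp Monoid.Coprod.inr).ker)) = π → ψ = πbar) ∧
      Function.Surjective πbar ∧
      Function.Injective (πbar.comp Monoid.Coprod.inl) ∧
      Function.Injective (πbar.comp Monoid.Coprod.inr) ∧
      IsFreeGroup πbar.ker ∧
      (Finite Q → Finite (A ⧸ (π.comp Monoid.Coprod.inl).ker) ∧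
        Finite (B ⧸ (π.comp Monoid.Coprod.inr).ker) ∧ Group.FG πbar.ker) :=
  statement9' π hπ
end
end

section
/- Let A and B be groups, let p : A ∗ B → A × B be the canonical homomorphism determined by ι_A(a) ↦ (a,1) and ι_B(b) ↦ (1,b), and let D = ker p. Then the homomorphism from the free group on the set (A∖{1}) × (B∖{1}) to A ∗ B which sends the generator (a,b) to the commutator [ι_A(a), ι_B(b)] = ι_A(a)·ι_B(b)·ι_A(a)⁻¹·ι_B(b)⁻¹ is injective, and its image is exactly D. In particular, D is a free group with free basis {[ι_A(a), ι_B(b)] : a ∈ A∖{1}, b ∈ B∖{1}}. -/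
namespace Statement10Aux

open Monoid

variable {A B : Type*} [Group A] [Group B]

/-- The index type of the free basis. -/
abbrev T (A B : Type*) [Group A] [Group B] := {q : A × B // q.1 ≠ 1 ∧ q.2 ≠ 1}

/-- The map sending generators to commutators. -/
noncomputable def comMap : FreeGroup (T A B) →* Coprod A B :=
  FreeGroup.lift (fun t : T A B =>
    (Monoid.Coprod.inl : A →* Monoid.Coprod A B) t.1.1 *
      (Monoid.Coprod.inr : B →* Monoid.Coprod A B) t.1.2 *
      ((Monoid.Coprod.inl : A →* Monoid.Coprod A B) t.1.1)⁻¹ *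
      ((Monoid.Coprod.inr : B →* Monoid.Coprod A B) t.1.2)⁻¹)

open Classical in
/-- The generator corresponding to `(a, b)`, or `1` if one of them is trivial. -/
noncomputable def comGen (a : A) (b : B) : FreeGroup (T A B) :=
  if h : a ≠ 1 ∧ b ≠ 1 then FreeGroup.of ⟨(a, b), h⟩ else 1

@[simp] lemma comGen_one_left (b : B) : comGen (1 : A) b = 1 := by
  simp [comGen]

@[simp] lemma comGen_one_right (a : A) : comGen a (1 : B) = 1 := by
  simp [comGen]

lemma comGen_of_ne {a : A} {b : B} (ha : a ≠ 1) (hb : b ≠ 1) :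
    comGen a b = FreeGroup.of (⟨(a, b), ha, hb⟩ : T A B) := by
  simp [comGen, ha, hb]

lemma comMap_comGen (a : A) (b : B) :
    comMap (comGen a b) =
      Coprod.inl a * Coprod.inr b * (Coprod.inl a : Coprod A B)⁻¹ *
        (Coprod.inr b : Coprod A B)⁻¹ := by
  unfold comGen
  split_ifs with h
  · simp [comMap, FreeGroup.lift_apply_of]
  · rw [not_and_or, not_ne_iff, not_ne_iff] at h
    rcases h with rfl | rfl <;> simp

/-- The state space: a free-group word together with a pair `(a, b)`. -/
abbrev XSp (A B : Type*) [Group A] [Group B] := FreeGroup (T A B) × A × B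

/-- Right multiplication by `inl a'` in normal-form coordinates. -/
noncomputable def rA (a' : A) (x : XSp A B) : XSp A B :=
  (x.1 * comGen x.2.1 x.2.2 * (comGen (x.2.1 * a') x.2.2)⁻¹, x.2.1 * a', x.2.2)

lemma rA_rA (a' a'' : A) (x : XSp A B) : rA a'' (rA a' x) = rA (a' * a'') x := by
  obtain ⟨w, a, b⟩ := x
  simp [rA, mul_assoc]

@[simp] lemma rA_one (x : XSp A B) : rA (1 : A) x = x := by
  obtain ⟨w, a, b⟩ := x
  simp [rA, mul_assoc]

/-- Right multiplication by `inr b'` in normal-form coordinates. -/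
noncomputable def rB (b' : B) (x : XSp A B) : XSp A B :=
  (x.1, x.2.1, x.2.2 * b')

/-- Right multiplication by `inl a'⁻¹` as a permutation. -/
noncomputable def permA (a' : A) : Equiv.Perm (XSp A B) where
  toFun := rA a'⁻¹
  invFun := rA a'
  left_inv := fun x => by rw [rA_rA, inv_mul_cancel, rA_one]
  right_inv := fun x => by rw [rA_rA, mul_inv_cancel, rA_one]

/-- Right multiplication by `inr b'⁻¹` as a permutation. -/
noncomputable def permB (b' : B) : Equiv.Perm (XSp A B) where
  toFun := rB b'⁻¹
  invFun := rB b'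
  left_inv := fun x => by simp [rB]
  right_inv := fun x => by simp [rB]

noncomputable def homA : A →* Equiv.Perm (XSp A B) where
  toFun := permA
  map_one' := Equiv.ext fun x => by
    show rA (1 : A)⁻¹ x = x
    rw [inv_one, rA_one]
  map_mul' := fun a₁ a₂ => Equiv.ext fun x => by
    show rA (a₁ * a₂)⁻¹ x = rA a₁⁻¹ (rA a₂⁻¹ x)
    rw [rA_rA, mul_inv_rev]

noncomputable def homB : B →* Equiv.Perm (XSp A B) where
  toFun := permB
  map_one' := Equiv.ext fun x => by
    show rB (1 : B)⁻¹ x = x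
    simp [rB]
  map_mul' := fun b₁ b₂ => Equiv.ext fun x => by
    show rB (b₁ * b₂)⁻¹ x = rB b₁⁻¹ (rB b₂⁻¹ x)
    simp [rB, mul_assoc]

/-- The action homomorphism. -/
noncomputable def Phi : Coprod A B →* Equiv.Perm (XSp A B) := Coprod.lift homA homB

/-- `act g x` is "x · g" in normal-form coordinates. -/
noncomputable def act (g : Coprod A B) (x : XSp A B) : XSp A B := Phi g⁻¹ x

lemma act_mul (g h : Coprod A B) (x : XSp A B) : act (g * h) x = act h (act g x) := by
  simp [act, mul_inv_rev, map_mul]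

@[simp] lemma act_one (x : XSp A B) : act (1 : Coprod A B) x = x := by
  simp [act]

lemma act_inl (a' : A) (x : XSp A B) :
    act (Coprod.inl a' : Coprod A B) x =
      (x.1 * comGen x.2.1 x.2.2 * (comGen (x.2.1 * a') x.2.2)⁻¹, x.2.1 * a', x.2.2) := by
  show Phi ((Coprod.inl a' : Coprod A B))⁻¹ x = _
  rw [← map_inv]
  show (homA a'⁻¹ : Equiv.Perm (XSp A B)) x = _
  show rA a'⁻¹⁻¹ x = _
  rw [inv_inv]
  rfl

lemma act_inr (b' : B) (x : XSp A B) :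
    act (Coprod.inr b' : Coprod A B) x = (x.1, x.2.1, x.2.2 * b') := by
  show Phi ((Coprod.inr b' : Coprod A B))⁻¹ x = _
  rw [← map_inv]
  show (homB b'⁻¹ : Equiv.Perm (XSp A B)) x = _
  show rB b'⁻¹⁻¹ x = _
  rw [inv_inv]
  rfl

/-- Reconstruction: the action reads off right multiplication. -/
lemma recon (g : Coprod A B) (x : XSp A B) :
    comMap (act g x).1 * Coprod.inl (act g x).2.1 * Coprod.inr (act g x).2.2 =
      comMap x.1 * Coprod.inl x.2.1 * Coprod.inr x.2.2 * g := by
  induction g using Coprod.induction_on generalizing x with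
  | inl a' =>
    obtain ⟨w, a, b⟩ := x
    rw [act_inl]
    simp only [map_mul, map_inv, comMap_comGen]
    group
  | inr b' =>
    obtain ⟨w, a, b⟩ := x
    rw [act_inr]
    simp [map_mul, mul_assoc]
  | mul g h ihg ihh =>
    rw [act_mul, ihh, ihg, mul_assoc]

lemma act_comMap (w : FreeGroup (T A B)) (w₀ : FreeGroup (T A B)) :
    act (comMap w) ((w₀, 1, 1) : XSp A B) = (w₀ * w, 1, 1) := by
  induction w using FreeGroup.induction_on generalizing w₀ with
  | C1 => simp
  | of t =>
    obtain ⟨⟨a, b⟩, ha, hb⟩ := t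
    have hp : (pure (⟨(a, b), ha, hb⟩ : T A B) : FreeGroup (T A B)) =
        FreeGroup.of (⟨(a, b), ha, hb⟩ : T A B) := rfl
    have : comMap (FreeGroup.of (⟨(a, b), ha, hb⟩ : T A B)) =
        Coprod.inl a * Coprod.inr b * (Coprod.inl a : Coprod A B)⁻¹ *
          (Coprod.inr b : Coprod A B)⁻¹ := by
      simp [comMap, FreeGroup.lift_apply_of]
    rw [this, ← map_inv, ← map_inv]
    simp only [act_mul, act_inl, act_inr]
    simp [comGen_of_ne ha hb, FreeGroup.of]
  | inv_of t _ =>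
    obtain ⟨⟨a, b⟩, ha, hb⟩ := t
    have hp : (pure (⟨(a, b), ha, hb⟩ : T A B) : FreeGroup (T A B)) =
        FreeGroup.of (⟨(a, b), ha, hb⟩ : T A B) := rfl
    have : comMap (FreeGroup.of (⟨(a, b), ha, hb⟩ : T A B))⁻¹ =
        Coprod.inr b * Coprod.inl a * Coprod.inr b⁻¹ * Coprod.inl a⁻¹ := by
      simp only [comMap, map_inv, FreeGroup.lift_apply_of]
      group
    rw [this]
    simp only [act_mul, act_inl, act_inr]
    simp [comGen_of_ne ha hb, FreeGroup.of]
  | mul w₁ w₂ ih₁ ih₂ =>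
    rw [map_mul, act_mul, ih₁, ih₂, mul_assoc]

lemma comMap_injective : Function.Injective (comMap : FreeGroup (T A B) →* Coprod A B) := by
  intro w w' h
  have h1 := act_comMap w 1
  rw [h, act_comMap] at h1
  simpa using h1.symm

lemma toProd_comp_comMap :
    (Coprod.toProd : Coprod A B →* A × B).comp comMap = 1 := by
  apply FreeGroup.ext_hom
  intro t
  obtain ⟨⟨a, b⟩, ha, hb⟩ := t
  simp only [comMap, MonoidHom.comp_apply, FreeGroup.lift_apply_of, map_mul, map_inv,
    Coprod.toProd_apply_inl, Coprod.toProd_apply_inr, MonoidHom.one_apply]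
  ext <;> simp

lemma comMap_range :
    (comMap : FreeGroup (T A B) →* Coprod A B).range =
      (Coprod.toProd : Coprod A B →* A × B).ker := by
  ext g
  constructor
  · rintro ⟨w, rfl⟩
    have := DFunLike.congr_fun (toProd_comp_comMap (A := A) (B := B)) w
    simpa [MonoidHom.mem_ker] using this
  · intro hg
    rw [MonoidHom.mem_ker] at hg
    have hr := recon g ((1, 1, 1) : XSp A B)
    simp only [map_one, one_mul, mul_one] at hr
    set x := act g ((1, 1, 1) : XSp A B) with hx
    have hp := congrArg Coprod.toProd hr
    have h1 : Coprod.toProd (comMap x.1) = 1 :=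
      DFunLike.congr_fun (toProd_comp_comMap (A := A) (B := B)) x.1
    rw [hg, map_mul, map_mul, h1, one_mul, Coprod.toProd_apply_inl,
      Coprod.toProd_apply_inr] at hp
    have ha : x.2.1 = 1 := by simpa using congrArg Prod.fst hp
    have hb : x.2.2 = 1 := by simpa using congrArg Prod.snd hp
    exact ⟨x.1, by rw [← hr, ha, hb, map_one, map_one, mul_one, mul_one]⟩

end Statement10Aux

/-- The kernel `D` of the canonical map `A ∗ B → A × B` is a free group
with free basis the commutators `[ι_A(a), ι_B(b)]`, `a ≠ 1`, `b ≠ 1`: the homomorphism from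
the free group on `(A∖{1}) × (B∖{1})` sending a generator to the corresponding commutator
is injective with image exactly `D`. -/
theorem statement10 {A B : Type*} [Group A] [Group B] :
    Function.Injective
      (FreeGroup.lift (fun t : {q : A × B // q.1 ≠ 1 ∧ q.2 ≠ 1} =>
        (Monoid.Coprod.inl : A →* Monoid.Coprod A B) t.1.1 *
          (Monoid.Coprod.inr : B →* Monoid.Coprod A B) t.1.2 *
          ((Monoid.Coprod.inl : A →* Monoid.Coprod A B) t.1.1)⁻¹ *
          ((Monoid.Coprod.inr : B →* Monoid.Coprod A B) t.1.2)⁻¹)) ∧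
    (FreeGroup.lift (fun t : {q : A × B // q.1 ≠ 1 ∧ q.2 ≠ 1} =>
        (Monoid.Coprod.inl : A →* Monoid.Coprod A B) t.1.1 *
          (Monoid.Coprod.inr : B →* Monoid.Coprod A B) t.1.2 *
          ((Monoid.Coprod.inl : A →* Monoid.Coprod A B) t.1.1)⁻¹ *
          ((Monoid.Coprod.inr : B →* Monoid.Coprod A B) t.1.2)⁻¹)).range =
      (Monoid.Coprod.toProd : Monoid.Coprod A B →* A × B).ker :=
  ⟨Statement10Aux.comMap_injective, Statement10Aux.comMap_range⟩
end

section
/- Let (X_n)_{n∈ℕ} and (Y_n)_{n∈ℕ} be sequences of metric spaces, let G be a group acting by isometries on every X_n and every Y_n, and let F_n : X_n → Y_n be G-equivariant 1-Lipschitz maps. Assume: (1) the sequence (Y_n) is equi-exact; (2) the actions on (Y_n) are uniformly cobounded, i.e. there is C > 0 such that for every n and all y, y' ∈ Y_n there is g ∈ G with d(g·y, y') ≤ C; (3) there are points y_n ∈ Y_n such that for every R ≥ 0 the sequence of subspaces (F_n⁻¹(closed ball B(y_n, R)))_{n∈ℕ}, with metrics inherited from X_n, coarsely embeds uniformly into Hilbert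 space (control functions may depend on R). Then the sequence (X_n) coarsely embeds uniformly into Hilbert space. -/
namespace St15
open scoped InnerProductSpace

lemma sqrt_sub_sq_le_abs {a b : ℝ} (ha : 0 ≤ a) (hb : 0 ≤ b) :
    (Real.sqrt a - Real.sqrt b) ^ 2 ≤ |a - b| := by
  rcases le_total b a with h | h
  · rw [abs_of_nonneg (by linarith)]
    have h1 : Real.sqrt b ≤ Real.sqrt a := Real.sqrt_le_sqrt h
    have h2 : (Real.sqrt a - Real.sqrt b) ≤ (Real.sqrt a + Real.sqrt b) := by
      have := Real.sqrt_nonneg b; linarith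
    calc (Real.sqrt a - Real.sqrt b) ^ 2
        ≤ (Real.sqrt a - Real.sqrt b) * (Real.sqrt a + Real.sqrt b) := by
          rw [sq]; exact mul_le_mul_of_nonneg_left h2 (by linarith)
      _ = a - b := by
          have := Real.sq_sqrt ha; have := Real.sq_sqrt hb; ring_nf; nlinarith
  · rw [abs_of_nonpos (by linarith)]
    have h1 : Real.sqrt a ≤ Real.sqrt b := Real.sqrt_le_sqrt h
    have h2 : (Real.sqrt b - Real.sqrt a) ≤ (Real.sqrt b + Real.sqrt a) := by
      have := Real.sqrt_nonneg a; linarith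
    calc (Real.sqrt a - Real.sqrt b) ^ 2 = (Real.sqrt b - Real.sqrt a) ^ 2 := by ring
      _ ≤ (Real.sqrt b - Real.sqrt a) * (Real.sqrt b + Real.sqrt a) := by
          rw [sq]; exact mul_le_mul_of_nonneg_left h2 (by linarith)
      _ = b - a := by
          have := Real.sq_sqrt ha; have := Real.sq_sqrt hb; nlinarith
      _ ≤ -(a - b) := by linarith

lemma hasSum_pi_prod {ι : Type*} :
    ∀ (n : ℕ) (h : ι → ℝ), Summable (fun i => |h i|) →
      HasSum (fun a : Fin n → ι => ∏ j, h (a j)) ((∑' i, h i) ^ n) := by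
  intro n
  induction n with
  | zero =>
    intro h _
    have : (fun a : Fin 0 → ι => ∏ j, h (a j)) = fun _ => (1 : ℝ) := by
      funext a; simp
    rw [this, pow_zero]
    exact hasSum_single (default : Fin 0 → ι)
      (fun b hb => absurd (Subsingleton.elim b default) hb)
  | succ n IH =>
    intro h hh
    have IHh := IH h hh
    have IHabs := IH (fun i => |h i|) (by simpa using hh)
    have habs : Summable fun a : Fin n → ι => |∏ j, h (a j)| := by
      refine IHabs.summable.congr fun a => ?_
      simp [Finset.abs_prod]
    have hprod : Summable fun x : ι × (Fin n → ι) => |h x.1 * ∏ j, h (x.2 j)| := by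
      have := Summable.mul_norm (R := ℝ) (f := h) (g := fun a : Fin n → ι => ∏ j, h (a j))
        (by simpa [Real.norm_eq_abs] using hh) (by simpa [Real.norm_eq_abs, Finset.abs_prod] using habs)
      refine this.congr fun x => ?_
      simp [Real.norm_eq_abs, abs_mul, Finset.abs_prod]
    have hsum : HasSum (fun x : ι × (Fin n → ι) => h x.1 * ∏ j, h (x.2 j))
        ((∑' i, h i) ^ (n + 1)) := by
      have hs : Summable (fun x : ι × (Fin n → ι) => h x.1 * ∏ j, h (x.2 j)) :=
        hprod.of_abs
      have := Summable.tsum_mul_tsum hh.of_abs IHh.summable hs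
      have heq : (∑' x : ι × (Fin n → ι), h x.1 * ∏ j, h (x.2 j))
          = (∑' i, h i) ^ (n + 1) := by
        rw [← this, IHh.tsum_eq, pow_succ]; ring
      rw [← heq]; exact hs.hasSum
    rw [← Equiv.hasSum_iff (Fin.consEquiv (fun _ : Fin (n+1) => ι))]
    have hcomp : ((fun a : Fin (n+1) → ι => ∏ j, h (a j)) ∘ ⇑(Fin.consEquiv (fun _ : Fin (n+1) => ι)))
        = fun x : ι × (Fin n → ι) => h x.1 * ∏ j, h (x.2 j) :=
      funext fun x => by simp [Fin.prod_univ_succ]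
    rw [hcomp]
    exact hsum

lemma hasSum_sigma_of_abs {β : Type*} {γ : β → Type*} {f : (Σ b, γ b) → ℝ} {g : β → ℝ} {a : ℝ}
    (hf : Summable fun p => |f p|) (hfib : ∀ b, HasSum (fun c => f ⟨b, c⟩) (g b))
    (hg : HasSum g a) : HasSum f a := by
  have hsf : Summable f := hf.of_abs
  have h1 := hsf.hasSum
  have h2 : HasSum g (∑' p, f p) := h1.sigma fun b => hfib b
  rwa [hg.unique h2]

lemma lp2_summable_sq {ι : Type*} (v : lp (fun _ : ι => ℝ) 2) :
    Summable (fun i => (v i) ^ 2) := by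
  have := (memℓp_gen_iff (p := 2) (by norm_num)).1 (lp.memℓp v)
  simpa [Real.rpow_natCast] using this

lemma lp2_summable_abs_mul {ι : Type*} (v w : lp (fun _ : ι => ℝ) 2) :
    Summable (fun i => |v i * w i|) := by
  refine Summable.of_nonneg_of_le (fun i => abs_nonneg _) (fun i => ?_)
    (((lp2_summable_sq v).add (lp2_summable_sq w)).div_const 2)
  have h1 : |v i * w i| = |v i| * |w i| := abs_mul _ _
  nlinarith [sq_abs (v i), sq_abs (w i), sq_nonneg (|v i| - |w i|), abs_nonneg (v i), abs_nonneg (w i)]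

/-- Index type of the full Fock space over `ι`. -/
abbrev FockIdx (ι : Type*) := Σ n : ℕ, Fin n → ι

noncomputable def fockCoef (t : ℝ) (n : ℕ) : ℝ := Real.sqrt ((2 * t) ^ n / n.factorial)

lemma fockCoef_sq {t : ℝ} (ht : 0 < t) (n : ℕ) :
    fockCoef t n ^ 2 = (2 * t) ^ n / n.factorial :=
  Real.sq_sqrt (by positivity)

lemma fock_fiber {ι : Type*} {t : ℝ} (ht : 0 < t) (h : ι → ℝ)
    (hh : Summable fun i => |h i|) (n : ℕ) :
    HasSum (fun a : Fin n → ι => fockCoef t n ^ 2 * ∏ j, h (a j))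
      ((2 * t) ^ n / n.factorial * (∑' i, h i) ^ n) := by
  have := (hasSum_pi_prod n h hh).mul_left ((2 * t) ^ n / n.factorial)
  rw [show (fun a : Fin n → ι => fockCoef t n ^ 2 * ∏ j, h (a j))
      = fun a : Fin n → ι => (2 * t) ^ n / n.factorial * ∏ j, h (a j) by
    funext a; rw [fockCoef_sq ht]]
  exact this

lemma fock_outer {t : ℝ} (X : ℝ) :
    HasSum (fun n : ℕ => (2 * t) ^ n / n.factorial * X ^ n) (Real.exp (2 * t * X)) := by
  have := NormedSpace.expSeries_div_hasSum_exp (2 * t * X)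
  rw [← Real.exp_eq_exp_ℝ] at this
  rw [show (fun n : ℕ => (2 * t) ^ n / n.factorial * X ^ n)
      = fun n : ℕ => (2 * t * X) ^ n / n.factorial by
    funext n; rw [mul_pow]; ring]
  exact this

lemma hasSum_gaussAux {ι : Type*} {t : ℝ} (ht : 0 < t) (v w : lp (fun _ : ι => ℝ) 2) :
    HasSum (fun p : FockIdx ι =>
      (fockCoef t p.1 * ∏ j, v (p.2 j)) * (fockCoef t p.1 * ∏ j, w (p.2 j)))
      (Real.exp (2 * t * ∑' i, v i * w i)) := by
  have hvw : Summable (fun i => |v i * w i|) := lp2_summable_abs_mul v w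
  have hc : ∀ n, 0 ≤ fockCoef t n := fun n => Real.sqrt_nonneg _
  have hfib : ∀ n : ℕ, HasSum
      (fun a : Fin n → ι => (fockCoef t n * ∏ j, v (a j)) * (fockCoef t n * ∏ j, w (a j)))
      ((2 * t) ^ n / n.factorial * (∑' i, v i * w i) ^ n) := by
    intro n
    have h1 := fock_fiber ht (fun i => v i * w i) hvw n
    rw [show (fun a : Fin n → ι => (fockCoef t n * ∏ j, v (a j)) * (fockCoef t n * ∏ j, w (a j)))
        = fun a : Fin n → ι => fockCoef t n ^ 2 * ∏ j, v (a j) * w (a j) by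
      funext a; rw [Finset.prod_mul_distrib]; ring]
    exact h1
  have hfibabs : ∀ n : ℕ, HasSum
      (fun a : Fin n → ι => |(fockCoef t n * ∏ j, v (a j)) * (fockCoef t n * ∏ j, w (a j))|)
      ((2 * t) ^ n / n.factorial * (∑' i, |v i * w i|) ^ n) := by
    intro n
    have h1 := fock_fiber ht (fun i => |v i * w i|) (by simpa using hvw) n
    rw [show (fun a : Fin n → ι => |(fockCoef t n * ∏ j, v (a j)) * (fockCoef t n * ∏ j, w (a j))|)
        = fun a : Fin n → ι => fockCoef t n ^ 2 * ∏ j, |v (a j) * w (a j)| by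
      funext a
      rw [abs_mul, abs_mul, abs_mul, abs_of_nonneg (hc n), Finset.abs_prod, Finset.abs_prod]
      simp only [abs_mul, Finset.prod_mul_distrib]
      ring]
    exact h1
  have habs : Summable (fun p : FockIdx ι =>
      |(fockCoef t p.1 * ∏ j, v (p.2 j)) * (fockCoef t p.1 * ∏ j, w (p.2 j))|) := by
    refine (summable_sigma_of_nonneg (fun p => abs_nonneg _)).2
      ⟨fun n => (hfibabs n).summable, ?_⟩
    refine (fock_outer (t := t) (∑' i, |v i * w i|)).summable.congr fun n => ?_
    exact ((hfibabs n).tsum_eq).symm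
  exact hasSum_sigma_of_abs habs hfib (fock_outer _)

lemma lp2_inner_eq {ι : Type*} (v w : lp (fun _ : ι => ℝ) 2) :
    ⟪v, w⟫_ℝ = ∑' i, v i * w i := by
  rw [lp.inner_eq_tsum]
  simp [RCLike.inner_apply]
  exact tsum_congr fun i => mul_comm _ _

noncomputable def gaussFun {ι : Type*} (t : ℝ) (v : lp (fun _ : ι => ℝ) 2) :
    ∀ _ : FockIdx ι, ℝ :=
  fun p => Real.exp (-t * ‖v‖ ^ 2) * (fockCoef t p.1 * ∏ j, v (p.2 j))

lemma memℓp_gaussFun {ι : Type*} {t : ℝ} (ht : 0 < t) (v : lp (fun _ : ι => ℝ) 2) :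
    Memℓp (gaussFun t v) 2 := by
  apply memℓp_gen
  have h := (hasSum_gaussAux ht v v).summable.mul_left (Real.exp (-t * ‖v‖ ^ 2) ^ 2)
  refine h.congr fun p => ?_
  simp only [gaussFun, Real.norm_eq_abs]
  rw [show ((2 : ENNReal).toReal) = (2 : ℝ) by norm_num, Real.rpow_two, sq_abs]
  ring

noncomputable def gaussMap {ι : Type*} (t : ℝ) (ht : 0 < t) (v : lp (fun _ : ι => ℝ) 2) :
    lp (fun _ : FockIdx ι => ℝ) 2 :=
  ⟨gaussFun t v, memℓp_gaussFun ht v⟩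

lemma inner_gaussMap {ι : Type*} {t : ℝ} (ht : 0 < t) (v w : lp (fun _ : ι => ℝ) 2) :
    ⟪gaussMap t ht v, gaussMap t ht w⟫_ℝ = Real.exp (-t * ‖v - w‖ ^ 2) := by
  rw [lp.inner_eq_tsum]
  have hs := (hasSum_gaussAux ht v w).mul_left
    (Real.exp (-t * ‖v‖ ^ 2) * Real.exp (-t * ‖w‖ ^ 2))
  have h2 : HasSum (fun p : FockIdx ι => ⟪gaussMap t ht v p, gaussMap t ht w p⟫_ℝ)
      (Real.exp (-t * ‖v‖ ^ 2) * Real.exp (-t * ‖w‖ ^ 2)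
        * Real.exp (2 * t * ∑' i, v i * w i)) := by
    rw [show (fun p : FockIdx ι => ⟪gaussMap t ht v p, gaussMap t ht w p⟫_ℝ)
        = fun p : FockIdx ι => Real.exp (-t * ‖v‖ ^ 2) * Real.exp (-t * ‖w‖ ^ 2)
          * ((fockCoef t p.1 * ∏ j, v (p.2 j)) * (fockCoef t p.1 * ∏ j, w (p.2 j))) by
      funext p
      show ⟪gaussFun t v p, gaussFun t w p⟫_ℝ = _
      simp only [RCLike.inner_apply, conj_trivial, gaussFun]
      ring]
    exact hs
  rw [h2.tsum_eq, ← Real.exp_add, ← Real.exp_add]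
  congr 1
  have hn : ‖v - w‖ ^ 2 = ‖v‖ ^ 2 - 2 * ⟪v, w⟫_ℝ + ‖w‖ ^ 2 := norm_sub_sq_real v w
  rw [lp2_inner_eq] at hn
  rw [hn]; ring

lemma norm_gaussMap {ι : Type*} {t : ℝ} (ht : 0 < t) (v : lp (fun _ : ι => ℝ) 2) :
    ‖gaussMap t ht v‖ = 1 := by
  have h := inner_gaussMap ht v v
  simp only [sub_self, norm_zero] at h
  have h2 : ‖gaussMap t ht v‖ ^ 2 = 1 := by
    rw [← real_inner_self_eq_norm_sq, h]; norm_num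
  nlinarith [norm_nonneg (gaussMap t ht v)]

section Abstract

variable (E : Type*) [NormedAddCommGroup E] [InnerProductSpace ℝ E] [CompleteSpace E]

noncomputable def gBasisSet : Set E := (exists_hilbertBasis ℝ E).choose

noncomputable def gBasis : HilbertBasis (gBasisSet E) ℝ E :=
  (exists_hilbertBasis ℝ E).choose_spec.choose

/-- The "Gaussian functor" Hilbert space associated to `E`. -/
abbrev GaussSpace : Type _ := lp (fun _ : FockIdx (gBasisSet E) => ℝ) 2

variable {E}

noncomputable def gaussE (t : ℝ) (ht : 0 < t) (v : E) : GaussSpace E :=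
  gaussMap t ht ((gBasis E).repr v)

lemma inner_gaussE {t : ℝ} (ht : 0 < t) (v w : E) :
    ⟪gaussE t ht v, gaussE t ht w⟫_ℝ = Real.exp (-t * ‖v - w‖ ^ 2) := by
  rw [gaussE, gaussE, inner_gaussMap]
  have : ‖(gBasis E).repr v - (gBasis E).repr w‖ = ‖v - w‖ := by
    rw [← map_sub]
    exact (gBasis E).repr.norm_map _
  rw [this]

lemma norm_gaussE {t : ℝ} (ht : 0 < t) (v : E) : ‖gaussE t ht v‖ = 1 :=
  norm_gaussMap ht _

lemma norm_sub_gaussE_sq {t : ℝ} (ht : 0 < t) (v w : E) :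
    ‖gaussE t ht v - gaussE t ht w‖ ^ 2 = 2 - 2 * Real.exp (-t * ‖v - w‖ ^ 2) := by
  rw [norm_sub_sq_real, inner_gaussE ht, norm_gaussE ht, norm_gaussE ht]
  ring

lemma norm_sub_gaussE_sq_le {t : ℝ} (ht : 0 < t) (v w : E) :
    ‖gaussE t ht v - gaussE t ht w‖ ^ 2 ≤ 2 * t * ‖v - w‖ ^ 2 := by
  rw [norm_sub_gaussE_sq ht]
  have h := Real.add_one_le_exp (-(t * ‖v - w‖ ^ 2))
  have : 1 - t * ‖v - w‖ ^ 2 ≤ Real.exp (-t * ‖v - w‖ ^ 2) := by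
    rw [show -t * ‖v - w‖ ^ 2 = -(t * ‖v - w‖ ^ 2) by ring]; linarith
  linarith

end Abstract

lemma memℓp_two_iff {ι' : Type*} (Hf : ι' → Type*) [∀ i, NormedAddCommGroup (Hf i)]
    (f : ∀ i, Hf i) : Memℓp f 2 ↔ Summable fun i => ‖f i‖ ^ 2 := by
  rw [memℓp_gen_iff (p := 2) (by norm_num)]
  constructor <;> intro h <;> refine h.congr fun i => ?_ <;>
    rw [show ((2 : ENNReal).toReal) = (2 : ℝ) by norm_num, Real.rpow_two]

lemma lp_norm_sq {ι' : Type*} {Hf : ι' → Type*} [∀ i, NormedAddCommGroup (Hf i)]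
    (f : lp Hf 2) : ‖f‖ ^ 2 = ∑' i, ‖f i‖ ^ 2 := by
  have h := lp.norm_rpow_eq_tsum (p := 2) (by norm_num) f
  rw [show ((2 : ENNReal).toReal) = (2 : ℝ) by norm_num] at h
  rw [← Real.rpow_two, h]
  exact tsum_congr fun i => Real.rpow_two _


/-- Sphere-valued maps with prescribed close/far behaviour. -/
def SphereData (Z : Type*) [MetricSpace Z] (R ε S : ℝ) : Prop :=
  ∃ (H : Type) (iN : NormedAddCommGroup H)
    (_ : @InnerProductSpace ℝ H inferInstance iN.toSeminormedAddCommGroup)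
    (_ : @CompleteSpace H iN.toMetricSpace.toPseudoMetricSpace.toUniformSpace)
    (ξ : Z → H),
    (∀ x y : Z, @dist H iN.toMetricSpace.toPseudoMetricSpace.toDist (ξ x) (ξ y) ≤ 2) ∧
    (∀ x y : Z, dist x y ≤ R →
      @dist H iN.toMetricSpace.toPseudoMetricSpace.toDist (ξ x) (ξ y) ≤ ε) ∧
    (∀ x y : Z, S ≤ dist x y →
      1 ≤ @dist H iN.toMetricSpace.toPseudoMetricSpace.toDist (ξ x) (ξ y))

lemma pack_embed {X : ℕ → Type*} [∀ n, MetricSpace (X n)] (ρm ρp : ℝ → ℝ)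
    (hm : Monotone ρm) (hp : Monotone ρp) (ht : Filter.Tendsto ρm Filter.atTop Filter.atTop)
    (h : ∀ n, ∃ (H : Type) (iN : NormedAddCommGroup H)
      (_ : @InnerProductSpace ℝ H inferInstance iN.toSeminormedAddCommGroup)
      (_ : @CompleteSpace H iN.toMetricSpace.toPseudoMetricSpace.toUniformSpace)
      (F : X n → H), ∀ x y : X n,
        ρm (dist x y) ≤ @dist H iN.toMetricSpace.toPseudoMetricSpace.toDist (F x) (F y) ∧
        @dist H iN.toMetricSpace.toPseudoMetricSpace.toDist (F x) (F y) ≤ ρp (dist x y)) :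
    UnifCoarseEmbedHilbert X (fun n (x y : X n) => dist x y) := by
  choose H iN iI iC F hF using h
  exact ⟨H, iN, iI, iC, F, ρm, ρp, hm, hp, ht, hF⟩

lemma assemble {X : ℕ → Type*} [∀ n, MetricSpace (X n)]
    (hyp : ∀ k : ℕ, ∃ S : ℝ, 0 ≤ S ∧
      ∀ n, SphereData (X n) ((k : ℝ) + 1) (2 * (2 : ℝ) ^ (-(k : ℤ))) S) :
    UnifCoarseEmbedHilbert X (fun n (x y : X n) => dist x y) := by
  choose S hS0 hSD using hyp
  classical
  set S' : ℕ → ℝ := fun k => (k : ℝ) + ∑ j ∈ Finset.range (k + 1), max (S j) 0 with hS'def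
  have hS'mono : Monotone S' := by
    intro a b hab
    have h1 : (a : ℝ) ≤ b := by exact_mod_cast hab
    have h2 : ∑ j ∈ Finset.range (a + 1), max (S j) 0 ≤ ∑ j ∈ Finset.range (b + 1), max (S j) 0 :=
      Finset.sum_le_sum_of_subset_of_nonneg
        (Finset.range_subset_range.2 (by omega)) (fun j _ _ => le_max_right _ _)
    simp only [hS'def]; linarith
  have hS'ge : ∀ k : ℕ, (k : ℝ) ≤ S' k := by
    intro k
    have : (0:ℝ) ≤ ∑ j ∈ Finset.range (k + 1), max (S j) 0 :=
      Finset.sum_nonneg fun j _ => le_max_right _ _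
    simp only [hS'def]; linarith
  have hSleS' : ∀ k : ℕ, S k ≤ S' k := by
    intro k
    have h1 : max (S k) 0 ≤ ∑ j ∈ Finset.range (k + 1), max (S j) 0 :=
      Finset.single_le_sum (f := fun j => max (S j) 0) (fun j _ => le_max_right _ _)
        (Finset.self_mem_range_succ k)
    have := le_max_left (S k) 0
    have hk : (0:ℝ) ≤ (k:ℕ) := Nat.cast_nonneg k
    simp only [hS'def]; linarith
  have hfin : ∀ r : ℝ, {k : ℕ | S' k ≤ r}.Finite := by
    intro r
    refine Set.Finite.subset (Set.finite_Iic ⌊max 0 r⌋₊) fun k hk => ?_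
    simp only [Set.mem_setOf_eq] at hk
    have h1 : (k : ℝ) ≤ r := le_trans (hS'ge k) hk
    simp only [Set.mem_Iic]
    exact Nat.le_floor (le_trans h1 (le_max_right _ _))
  set ρmf : ℝ → ℝ := fun r => Real.sqrt (Set.ncard {k : ℕ | S' k ≤ r}) with hρmf
  set ρpf : ℝ → ℝ := fun r => Real.sqrt (4 * (⌈r⌉₊ : ℝ) + 6) with hρpf
  have hρm_mono : Monotone ρmf := by
    intro a b hab
    refine Real.sqrt_le_sqrt ?_
    have : {k : ℕ | S' k ≤ a} ⊆ {k : ℕ | S' k ≤ b} := fun k hk => le_trans hk hab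
    exact_mod_cast Nat.cast_le.2 (Set.ncard_le_ncard this (hfin b))
  have hρp_mono : Monotone ρpf := by
    intro a b hab
    refine Real.sqrt_le_sqrt ?_
    have : (⌈a⌉₊ : ℝ) ≤ (⌈b⌉₊ : ℝ) := by exact_mod_cast Nat.ceil_le_ceil hab
    linarith
  have hρm_tendsto : Filter.Tendsto ρmf Filter.atTop Filter.atTop := by
    rw [Filter.tendsto_atTop_atTop]
    intro b
    rcases le_or_gt b 0 with hb | hb
    · exact ⟨0, fun a _ => le_trans hb (Real.sqrt_nonneg _)⟩
    · set M : ℕ := ⌈b ^ 2⌉₊ with hM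
      refine ⟨S' M, fun a ha => ?_⟩
      have hsub : ↑(Finset.range (M + 1)) ⊆ {k : ℕ | S' k ≤ a} := by
        intro k hk
        simp only [Finset.coe_range, Set.mem_Iio] at hk
        exact le_trans (hS'mono (by omega : k ≤ M)) ha
      have hcard : M + 1 ≤ Set.ncard {k : ℕ | S' k ≤ a} := by
        have := Set.ncard_le_ncard hsub (hfin a)
        rwa [Set.ncard_coe_finset, Finset.card_range] at this
      have h2 : b ^ 2 ≤ (Set.ncard {k : ℕ | S' k ≤ a} : ℝ) := by
        have h3 : b ^ 2 ≤ (M : ℝ) := Nat.le_ceil _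
        have h4 : (M : ℝ) ≤ (M : ℝ) + 1 := by linarith
        have h5 : ((M : ℕ) + 1 : ℝ) ≤ (Set.ncard {k : ℕ | S' k ≤ a} : ℝ) := by
          exact_mod_cast hcard
        push_cast at h5 ⊢
        linarith
      calc b = Real.sqrt (b ^ 2) := by rw [Real.sqrt_sq hb.le]
        _ ≤ ρmf a := Real.sqrt_le_sqrt h2
  refine pack_embed ρmf ρpf hρm_mono hρp_mono hρm_tendsto fun n => ?_
  choose Hk iNk iIk iCk ξ hprops using fun k => hSD k n
  letI : ∀ k, NormedAddCommGroup (Hk k) := iNk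
  letI : ∀ k, InnerProductSpace ℝ (Hk k) := iIk
  letI : ∀ k, CompleteSpace (Hk k) := iCk
  have hbd : ∀ (k : ℕ) (x y : X n), ‖ξ k x - ξ k y‖ ≤ 2 := by
    intro k x y
    have h := (hprops k).1 x y
    rwa [show @dist (Hk k) (iNk k).toMetricSpace.toPseudoMetricSpace.toDist (ξ k x) (ξ k y)
      = ‖ξ k x - ξ k y‖ from dist_eq_norm _ _] at h
  have hclose : ∀ (k : ℕ) (x y : X n), dist x y ≤ (k : ℝ) + 1 →
      ‖ξ k x - ξ k y‖ ≤ 2 * (2 : ℝ) ^ (-(k : ℤ)) := by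
    intro k x y hxy
    have h := (hprops k).2.1 x y hxy
    rwa [show @dist (Hk k) (iNk k).toMetricSpace.toPseudoMetricSpace.toDist (ξ k x) (ξ k y)
      = ‖ξ k x - ξ k y‖ from dist_eq_norm _ _] at h
  have hfar : ∀ (k : ℕ) (x y : X n), S k ≤ dist x y → 1 ≤ ‖ξ k x - ξ k y‖ := by
    intro k x y hxy
    have h := (hprops k).2.2 x y hxy
    rwa [show @dist (Hk k) (iNk k).toMetricSpace.toPseudoMetricSpace.toDist (ξ k x) (ξ k y)
      = ‖ξ k x - ξ k y‖ from dist_eq_norm _ _] at h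
  by_cases hne : Nonempty (X n)
  swap
  · exact ⟨ℝ, inferInstance, inferInstance, inferInstance,
      fun x => (hne ⟨x⟩).elim, fun x y => (hne ⟨x⟩).elim⟩
  obtain ⟨x₀⟩ := hne
  -- key bound
  have hgeo : Summable (fun k : ℕ => (4 : ℝ) * (1 / 4) ^ k) :=
    (summable_geometric_of_lt_one (by norm_num) (by norm_num)).mul_left 4
  have hsq_of_close : ∀ (k : ℕ) (x y : X n), dist x y ≤ (k : ℝ) + 1 →
      ‖ξ k x - ξ k y‖ ^ 2 ≤ 4 * (1 / 4 : ℝ) ^ k := by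
    intro k x y hxy
    have h := hclose k x y hxy
    have h2 : (2 * (2 : ℝ) ^ (-(k : ℤ))) ^ 2 = 4 * (1 / 4) ^ k := by
      have he : (2:ℝ) ^ (-(k:ℤ)) = ((1:ℝ)/2) ^ k := by
        rw [zpow_neg, zpow_natCast, one_div, inv_pow]
      rw [he, mul_pow, ← pow_mul, mul_comm k 2, pow_mul]
      norm_num
    calc ‖ξ k x - ξ k y‖ ^ 2 ≤ (2 * (2 : ℝ) ^ (-(k : ℤ))) ^ 2 := by
          have hnn : (0:ℝ) ≤ ‖ξ k x - ξ k y‖ := norm_nonneg _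
          nlinarith [zpow_pos (show (0:ℝ) < 2 by norm_num) (-(k:ℤ))]
      _ = 4 * (1 / 4) ^ k := h2
  have key : ∀ (x y : X n) (m : ℕ), dist x y ≤ (m : ℝ) →
      (Summable fun k => ‖ξ k x - ξ k y‖ ^ 2) ∧
        (∑' k, ‖ξ k x - ξ k y‖ ^ 2) ≤ 4 * (m : ℝ) + 6 := by
    intro x y m hxy
    set h : ℕ → ℝ := fun k => 4 * (1 / 4 : ℝ) ^ k + (if k < m then 4 else 0) with hh
    have hhsum : Summable h := by
      refine hgeo.add (summable_of_ne_finset_zero (s := Finset.range m) fun k hk => ?_)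
      simp only [Finset.mem_range] at hk
      simp [if_neg hk]
    have hterm : ∀ k, ‖ξ k x - ξ k y‖ ^ 2 ≤ h k := by
      intro k
      rcases lt_or_ge k m with hkm | hkm
      · have := hbd k x y
        have h4 : ‖ξ k x - ξ k y‖ ^ 2 ≤ 4 := by nlinarith [norm_nonneg (ξ k x - ξ k y)]
        have : (0:ℝ) ≤ 4 * (1/4:ℝ)^k := by positivity
        simp only [hh, if_pos hkm]; linarith
      · have hd : dist x y ≤ (k : ℝ) + 1 := by
          have : (m : ℝ) ≤ (k : ℝ) := by exact_mod_cast hkm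
          linarith
        have := hsq_of_close k x y hd
        simp only [hh, if_neg (not_lt.2 hkm)]; linarith
    have hsummable : Summable fun k => ‖ξ k x - ξ k y‖ ^ 2 :=
      Summable.of_nonneg_of_le (fun k => sq_nonneg _) hterm hhsum
    refine ⟨hsummable, ?_⟩
    have h1 : (∑' k, ‖ξ k x - ξ k y‖ ^ 2) ≤ ∑' k, h k := Summable.tsum_le_tsum hterm hsummable hhsum
    have h2 : (∑' k, h k) = (∑' k, (4:ℝ) * (1/4)^k) + ∑' k, (if k < m then (4:ℝ) else 0) :=
      Summable.tsum_add hgeo (summable_of_ne_finset_zero (s := Finset.range m) fun k hk => by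
        simp only [Finset.mem_range] at hk; simp [if_neg hk])
    have h3 : (∑' k, (4:ℝ) * (1/4)^k) = 4 * (1 - 1/4)⁻¹ := by
      rw [tsum_mul_left, tsum_geometric_of_lt_one (by norm_num) (by norm_num)]
    have h4 : (∑' k, (if k < m then (4:ℝ) else 0)) = 4 * m := by
      rw [tsum_eq_sum (s := Finset.range m) (fun k hk => by
        simp only [Finset.mem_range] at hk; simp [if_neg hk])]
      rw [Finset.sum_ite_of_true (fun k hk => Finset.mem_range.1 hk)]
      simp [mul_comm]
    rw [h2, h3, h4] at h1
    have : 4 * (1 - 1/4 : ℝ)⁻¹ ≤ 6 := by norm_num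
    linarith
  -- the embedding
  set Φ : X n → lp (fun k => Hk k) 2 := fun x =>
    ⟨fun k => ξ k x - ξ k x₀, by
      exact (memℓp_two_iff _ _).2 (key x x₀ ⌈dist x x₀⌉₊ (Nat.le_ceil _)).1⟩ with hΦ
  have hΦcoord : ∀ (x y : X n) (k : ℕ), (Φ x - Φ y : lp (fun k => Hk k) 2) k = ξ k x - ξ k y := by
    intro x y k
    have : (Φ x - Φ y : lp (fun k => Hk k) 2) k = (Φ x : ∀ k, Hk k) k - (Φ y : ∀ k, Hk k) k := by
      rw [lp.coeFn_sub]; rfl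
    rw [this]
    show (ξ k x - ξ k x₀) - (ξ k y - ξ k x₀) = ξ k x - ξ k y
    abel
  have hnormsq : ∀ x y : X n, ‖Φ x - Φ y‖ ^ 2 = ∑' k, ‖ξ k x - ξ k y‖ ^ 2 := by
    intro x y
    rw [lp_norm_sq]
    exact tsum_congr fun k => by rw [hΦcoord]
  refine ⟨lp (fun k => Hk k) 2, inferInstance, inferInstance, inferInstance, Φ, fun x y => ⟨?_, ?_⟩⟩
  · -- lower bound
    show ρmf (dist x y) ≤ dist (Φ x) (Φ y)
    rw [dist_eq_norm]
    have hK : (Set.ncard {k : ℕ | S' k ≤ dist x y} : ℝ) ≤ ‖Φ x - Φ y‖ ^ 2 := by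
      rw [hnormsq]
      set Kf := (hfin (dist x y)).toFinset with hKf
      have hsummable : Summable fun k => ‖ξ k x - ξ k y‖ ^ 2 :=
        (key x y ⌈dist x y⌉₊ (Nat.le_ceil _)).1
      have hone : ∀ k ∈ Kf, (1:ℝ) ≤ ‖ξ k x - ξ k y‖ ^ 2 := by
        intro k hk
        rw [hKf, Set.Finite.mem_toFinset] at hk
        have h1 : S k ≤ dist x y := le_trans (hSleS' k) hk
        have := hfar k x y h1
        nlinarith [norm_nonneg (ξ k x - ξ k y)]
      have hcard : (Kf.card : ℝ) ≤ ∑ k ∈ Kf, ‖ξ k x - ξ k y‖ ^ 2 := by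
        calc (Kf.card : ℝ) = ∑ _k ∈ Kf, (1:ℝ) := by rw [Finset.sum_const]; simp
          _ ≤ _ := Finset.sum_le_sum hone
      have hle : ∑ k ∈ Kf, ‖ξ k x - ξ k y‖ ^ 2 ≤ ∑' k, ‖ξ k x - ξ k y‖ ^ 2 :=
        Summable.sum_le_tsum Kf (fun k _ => sq_nonneg _) hsummable
      have hncard : Set.ncard {k : ℕ | S' k ≤ dist x y} = Kf.card :=
        Set.ncard_eq_toFinset_card _ (hfin (dist x y))
      rw [hncard]
      linarith
    calc ρmf (dist x y) ≤ Real.sqrt (‖Φ x - Φ y‖ ^ 2) := Real.sqrt_le_sqrt hK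
      _ = ‖Φ x - Φ y‖ := Real.sqrt_sq (norm_nonneg _)
  · -- upper bound
    show dist (Φ x) (Φ y) ≤ ρpf (dist x y)
    rw [dist_eq_norm]
    have h1 : ‖Φ x - Φ y‖ ^ 2 ≤ 4 * (⌈dist x y⌉₊ : ℝ) + 6 := by
      rw [hnormsq]
      exact (key x y ⌈dist x y⌉₊ (Nat.le_ceil _)).2
    have h2 : (0:ℝ) ≤ 4 * (⌈dist x y⌉₊ : ℝ) + 6 := by positivity
    calc ‖Φ x - Φ y‖ = Real.sqrt (‖Φ x - Φ y‖ ^ 2) := by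
          rw [Real.sqrt_sq (norm_nonneg _)]
      _ ≤ ρpf (dist x y) := Real.sqrt_le_sqrt h1

set_option maxHeartbeats 2000000 in
lemma scale {G : Type*} [Group G] (X Y : ℕ → Type*)
    [∀ n, MetricSpace (X n)] [∀ n, MetricSpace (Y n)]
    [∀ n, MulAction G (X n)] [∀ n, MulAction G (Y n)]
    (hisoX : ∀ n (g : G), Isometry (fun x : X n => g • x))
    (hisoY : ∀ n (g : G), Isometry (fun y : Y n => g • y))
    (F : ∀ n, X n → Y n)
    (hFlip : ∀ n, LipschitzWith 1 (F n))
    (hFequiv : ∀ n (g : G) (x : X n), F n (g • x) = g • F n x)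
    (hYexact : EquiExact Y (fun n (y y' : Y n) => dist y y'))
    (hcobdd : ∃ C > (0:ℝ), ∀ n (y y' : Y n), ∃ g : G, dist (g • y) y' ≤ C)
    (y₀ : ∀ n, Y n)
    (hballs : ∀ R : ℝ, 0 ≤ R →
      UnifCoarseEmbedHilbert
        (fun n => {x : X n // F n x ∈ Metric.closedBall (y₀ n) R})
        (fun n a b => dist (a : X n) (b : X n)))
    (k : ℕ) :
    ∃ S : ℝ, 0 ≤ S ∧ ∀ n, SphereData (X n) ((k : ℝ) + 1) (2 * (2 : ℝ) ^ (-(k : ℤ))) S := by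
  classical
  obtain ⟨C, hCpos, hC⟩ := hcobdd
  set ε : ℝ := (2 : ℝ) ^ (-(k : ℤ)) with hεdef
  have hεpos : 0 < ε := zpow_pos (by norm_num) _
  obtain ⟨Ck, hCkpos, hpart⟩ := hYexact ((k : ℝ) + 1) (by positivity) (ε ^ 2 / 2) (by positivity)
  set R'' : ℝ := C + Ck + ((k : ℝ) + 1) with hR''def
  have hk0 : (0:ℝ) ≤ (k:ℝ) := Nat.cast_nonneg k
  have hR'' : 0 ≤ R'' := by rw [hR''def]; linarith
  obtain ⟨H', iN', iI', iC', ψ, ρm, ρp, hρm_mono, hρp_mono, hρm_tendsto, hψ⟩ := hballs R'' hR''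
  set q : ℝ := ρp ((k : ℝ) + 1) with hqdef
  set t : ℝ := ε ^ 2 / (4 * (q ^ 2 + 1)) with htdef
  have hq1 : (0:ℝ) < q ^ 2 + 1 := by positivity
  have htpos : 0 < t := by rw [htdef]; positivity
  have htρp : 4 * t * q ^ 2 ≤ ε ^ 2 := by
    have h1 : t * (4 * (q ^ 2 + 1)) = ε ^ 2 := by
      rw [htdef]; field_simp
    nlinarith [htpos.le, sq_nonneg q]
  have hlog : (0:ℝ) ≤ Real.log 2 / t :=
    div_nonneg (Real.log_nonneg (by norm_num)) htpos.le
  obtain ⟨S₀, hS₀⟩ := Filter.eventually_atTop.1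
    (hρm_tendsto.eventually_ge_atTop (Real.sqrt (Real.log 2 / t)))
  refine ⟨max S₀ 0, le_max_right _ _, fun n => ?_⟩
  obtain ⟨I, φ, hφ01, hφsum, hφlip, hφdiam⟩ := hpart n
  letI := iN' n; letI := iI' n; letI := iC' n
  have hφnn : ∀ (i : I) (y : Y n), 0 ≤ φ i y := fun i y => (hφ01 i y).1
  -- choice of translations
  have hgex : ∀ i : I, ∃ g : G, ∀ x : X n, φ i (F n x) ≠ 0 →
      dist (g • F n x) (y₀ n) ≤ C + Ck := by
    intro i
    by_cases hA : ∃ x : X n, φ i (F n x) ≠ 0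
    · obtain ⟨z, hz⟩ := hA
      obtain ⟨gg, hgd⟩ := hC n (F n z) (y₀ n)
      refine ⟨gg, fun x hx => ?_⟩
      have h1 : dist (F n x) (F n z) ≤ Ck := hφdiam i _ _ hx hz
      have h2 : dist (gg • F n x) (gg • F n z) = dist (F n x) (F n z) :=
        (hisoY n gg).dist_eq _ _
      calc dist (gg • F n x) (y₀ n)
          ≤ dist (gg • F n x) (gg • F n z) + dist (gg • F n z) (y₀ n) := dist_triangle _ _ _
        _ ≤ Ck + C := by rw [h2]; exact add_le_add h1 hgd
        _ = C + Ck := by ring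
    · exact ⟨1, fun x hx => absurd ⟨x, hx⟩ hA⟩
  choose g hg using hgex
  have hmem : ∀ (i : I) (x : X n), φ i (F n x) ≠ 0 →
      F n (g i • x) ∈ Metric.closedBall (y₀ n) R'' := by
    intro i x hx
    rw [hFequiv, Metric.mem_closedBall]
    have := hg i x hx
    rw [hR''def]; linarith
  have hmem' : ∀ (i : I) (x y : X n), φ i (F n y) ≠ 0 → dist x y ≤ (k : ℝ) + 1 →
      F n (g i • x) ∈ Metric.closedBall (y₀ n) R'' := by
    intro i x y hy hxy
    rw [hFequiv, Metric.mem_closedBall]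
    have h1 : dist (g i • F n x) (g i • F n y) = dist (F n x) (F n y) :=
      (hisoY n (g i)).dist_eq _ _
    have h2 : dist (F n x) (F n y) ≤ dist x y := by
      have := (hFlip n).dist_le_mul x y
      simpa using this
    have h3 := hg i y hy
    calc dist (g i • F n x) (y₀ n)
        ≤ dist (g i • F n x) (g i • F n y) + dist (g i • F n y) (y₀ n) := dist_triangle _ _ _
      _ ≤ dist x y + (C + Ck) := by rw [h1]; exact add_le_add (le_trans h2 le_rfl) h3
      _ ≤ R'' := by rw [hR''def]; linarith
  -- the Gauss-sphere maps
  set η : I → X n → GaussSpace (H' n) := fun i x =>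
    if h : F n (g i • x) ∈ Metric.closedBall (y₀ n) R''
    then gaussE t htpos (ψ n ⟨g i • x, h⟩) else 0 with hηdef
  have hη_eq : ∀ (i : I) (x : X n) (h : F n (g i • x) ∈ Metric.closedBall (y₀ n) R''),
      η i x = gaussE t htpos (ψ n ⟨g i • x, h⟩) := by
    intro i x h
    rw [hηdef]; exact dif_pos h
  have hη_norm_le : ∀ (i : I) (x : X n), ‖η i x‖ ≤ 1 := by
    intro i x
    rw [hηdef]
    dsimp only
    split
    · rw [norm_gaussE]
    · simp
  have hη_unit : ∀ (i : I) (x : X n), F n (g i • x) ∈ Metric.closedBall (y₀ n) R'' →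
      ‖η i x‖ = 1 := by
    intro i x h
    rw [hη_eq i x h, norm_gaussE]
  have hmemℓ2 : ∀ x : X n, Memℓp (fun i => Real.sqrt (φ i (F n x)) • η i x) 2 := by
    intro x
    refine (memℓp_two_iff _ _).2 ?_
    refine Summable.of_nonneg_of_le (fun i => sq_nonneg _) (fun i => ?_) (hφsum (F n x)).summable
    rw [norm_smul, Real.norm_eq_abs, abs_of_nonneg (Real.sqrt_nonneg _), mul_pow,
      Real.sq_sqrt (hφnn _ _)]
    have h4 : ‖η i x‖ ^ 2 ≤ 1 := by
      nlinarith [norm_nonneg (η i x), hη_norm_le i x]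
    calc φ i (F n x) * ‖η i x‖ ^ 2 ≤ φ i (F n x) * 1 :=
          mul_le_mul_of_nonneg_left h4 (hφnn i (F n x))
      _ = φ i (F n x) := mul_one _
  set ξ : X n → lp (fun _ : I => GaussSpace (H' n)) 2 :=
    fun x => ⟨fun i => Real.sqrt (φ i (F n x)) • η i x, hmemℓ2 x⟩ with hξdef
  have hξcoord : ∀ (x : X n) (i : I),
      (ξ x : ∀ _ : I, GaussSpace (H' n)) i = Real.sqrt (φ i (F n x)) • η i x := fun x i => rfl
  have hcoord_sq : ∀ (x : X n) (i : I),
      ‖(ξ x : ∀ _ : I, GaussSpace (H' n)) i‖ ^ 2 = φ i (F n x) := by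
    intro x i
    rw [hξcoord, norm_smul, Real.norm_eq_abs, abs_of_nonneg (Real.sqrt_nonneg _), mul_pow,
      Real.sq_sqrt (hφnn _ _)]
    by_cases h0 : φ i (F n x) = 0
    · rw [h0]; ring
    · rw [hη_unit i x (hmem i x h0)]; ring
  have hξnorm : ∀ x, ‖ξ x‖ = 1 := by
    intro x
    have h1 : ‖ξ x‖ ^ 2 = 1 := by
      rw [lp_norm_sq, tsum_congr (fun i => hcoord_sq x i)]
      exact (hφsum (F n x)).tsum_eq
    nlinarith [norm_nonneg (ξ x)]
  have hsub_i : ∀ (x y : X n) (i : I),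
      ((ξ x - ξ y : lp (fun _ : I => GaussSpace (H' n)) 2) : ∀ _ : I, GaussSpace (H' n)) i
        = (ξ x : ∀ _ : I, GaussSpace (H' n)) i - (ξ y : ∀ _ : I, GaussSpace (H' n)) i := by
    intro x y i
    rw [lp.coeFn_sub]; rfl
  have hnormsq : ∀ x y : X n, ‖ξ x - ξ y‖ ^ 2
      = ∑' i, ‖(ξ x : ∀ _ : I, GaussSpace (H' n)) i - (ξ y : ∀ _ : I, GaussSpace (H' n)) i‖ ^ 2 := by
    intro x y
    rw [lp_norm_sq]
    exact tsum_congr fun i => by rw [hsub_i]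
  -- (B) close pairs
  have hclose : ∀ x y : X n, dist x y ≤ (k : ℝ) + 1 → ‖ξ x - ξ y‖ ≤ 2 * ε := by
    intro x y hxy
    have hdY : dist (F n x) (F n y) ≤ (k : ℝ) + 1 := by
      have := (hFlip n).dist_le_mul x y
      simp only [NNReal.coe_one, one_mul] at this
      linarith
    obtain ⟨s, hsle, hs⟩ := hφlip (F n x) (F n y) hdY
    have hDsum : Summable (fun i => |φ i (F n x) - φ i (F n y)|) := hs.summable
    have hsqD : ∀ i, (Real.sqrt (φ i (F n x)) - Real.sqrt (φ i (F n y))) ^ 2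
        ≤ |φ i (F n x) - φ i (F n y)| :=
      fun i => sqrt_sub_sq_le_abs (hφnn _ _) (hφnn _ _)
    have hsqDsum : Summable fun i => (Real.sqrt (φ i (F n x)) - Real.sqrt (φ i (F n y))) ^ 2 :=
      Summable.of_nonneg_of_le (fun i => sq_nonneg _) hsqD hDsum
    have hterm : ∀ i, ‖(ξ x : ∀ _ : I, GaussSpace (H' n)) i - (ξ y : ∀ _ : I, GaussSpace (H' n)) i‖ ^ 2 ≤
        2 * (Real.sqrt (φ i (F n x)) - Real.sqrt (φ i (F n y))) ^ 2
          + (4 * t * q ^ 2) * φ i (F n y) := by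
      intro i
      rw [hξcoord, hξcoord]
      by_cases hy0 : φ i (F n y) = 0
      · rw [hy0, Real.sqrt_zero, zero_smul, sub_zero, norm_smul, Real.norm_eq_abs,
          abs_of_nonneg (Real.sqrt_nonneg _)]
        have h4 : ‖η i x‖ ^ 2 ≤ 1 := by
          nlinarith [norm_nonneg (η i x), hη_norm_le i x]
        have h5 : (Real.sqrt (φ i (F n x)) * ‖η i x‖) ^ 2
            = (Real.sqrt (φ i (F n x))) ^ 2 * ‖η i x‖ ^ 2 := by ring
        have h6 : (Real.sqrt (φ i (F n x))) ^ 2 * ‖η i x‖ ^ 2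
            ≤ (Real.sqrt (φ i (F n x))) ^ 2 * 1 :=
          mul_le_mul_of_nonneg_left h4 (sq_nonneg _)
        rw [h5]
        simp only [sub_zero, mul_zero, add_zero]
        nlinarith [sq_nonneg (Real.sqrt (φ i (F n x)))]
      · have hxball := hmem' i x y hy0 hxy
        have hyball := hmem i y hy0
        rw [hη_eq i x hxball, hη_eq i y hyball]
        set a := Real.sqrt (φ i (F n x)) with hadef
        set b := Real.sqrt (φ i (F n y)) with hbdef
        set u := gaussE t htpos (ψ n ⟨g i • x, hxball⟩) with hudef
        set v := gaussE t htpos (ψ n ⟨g i • y, hyball⟩) with hvdef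
        have ha : 0 ≤ a := Real.sqrt_nonneg _
        have hb : 0 ≤ b := Real.sqrt_nonneg _
        have hu : ‖u‖ = 1 := norm_gaussE _ _
        have hψd : ‖ψ n ⟨g i • x, hxball⟩ - ψ n ⟨g i • y, hyball⟩‖ ≤ q := by
          have h1 : dist (ψ n ⟨g i • x, hxball⟩) (ψ n ⟨g i • y, hyball⟩)
              ≤ ρp (dist ((⟨g i • x, hxball⟩ : {x : X n // F n x ∈ Metric.closedBall (y₀ n) R''}) : X n)
                ((⟨g i • y, hyball⟩ : {x : X n // F n x ∈ Metric.closedBall (y₀ n) R''}) : X n)) :=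
            (hψ n ⟨g i • x, hxball⟩ ⟨g i • y, hyball⟩).2
          have h2 : dist (g i • x : X n) (g i • y : X n) = dist x y := (hisoX n (g i)).dist_eq x y
          rw [← dist_eq_norm]
          refine le_trans h1 ?_
          rw [hqdef]
          refine hρp_mono ?_
          simp only [h2]
          exact hxy
        have hψnn : (0:ℝ) ≤ ‖ψ n ⟨g i • x, hxball⟩ - ψ n ⟨g i • y, hyball⟩‖ := norm_nonneg _
        have huv : ‖u - v‖ ^ 2 ≤ 2 * t * q ^ 2 := by
          refine le_trans (norm_sub_gaussE_sq_le htpos _ _) ?_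
          have h7 : ‖ψ n ⟨g i • x, hxball⟩ - ψ n ⟨g i • y, hyball⟩‖ ^ 2 ≤ q ^ 2 :=
            pow_le_pow_left₀ hψnn hψd 2
          nlinarith [htpos.le]
        have h3 : ‖a • u - b • v‖ ≤ |a - b| + b * ‖u - v‖ := by
          have htri : dist (a • u) (b • v) ≤ dist (a • u) (b • u) + dist (b • u) (b • v) :=
            dist_triangle _ _ _
          rw [dist_eq_norm, dist_eq_norm, dist_eq_norm] at htri
          have e1 : ‖a • u - b • u‖ = |a - b| * ‖u‖ := by
            rw [← sub_smul, norm_smul, Real.norm_eq_abs]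
          have e2 : ‖b • u - b • v‖ = b * ‖u - v‖ := by
            rw [← smul_sub, norm_smul, Real.norm_eq_abs, abs_of_nonneg hb]
          rw [e1, e2, hu, mul_one] at htri
          exact htri
        have hb2 : b ^ 2 = φ i (F n y) := Real.sq_sqrt (hφnn _ _)
        have h4 : ‖a • u - b • v‖ ^ 2 ≤ 2 * (a - b) ^ 2 + 2 * (b ^ 2 * ‖u - v‖ ^ 2) := by
          have hnn := norm_nonneg (a • u - b • v)
          have hnn2 := norm_nonneg (u - v)
          nlinarith [pow_le_pow_left₀ hnn h3 2, sq_nonneg (|a - b| - b * ‖u - v‖),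
            sq_abs (a - b), abs_nonneg (a - b), mul_nonneg hb hnn2]
        rw [hb2] at h4
        have h5 : 2 * (φ i (F n y) * ‖u - v‖ ^ 2) ≤ (4 * t * q ^ 2) * φ i (F n y) := by
          have := hφnn i (F n y)
          nlinarith
        linarith
    have hLsum : Summable (fun i =>
        ‖(ξ x : ∀ _ : I, GaussSpace (H' n)) i - (ξ y : ∀ _ : I, GaussSpace (H' n)) i‖ ^ 2) := by
      have h1 := (memℓp_two_iff _ _).1 (lp.memℓp (ξ x - ξ y))
      refine h1.congr fun i => ?_
      rw [hsub_i]
    have hTsum : Summable (fun i =>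
        2 * (Real.sqrt (φ i (F n x)) - Real.sqrt (φ i (F n y))) ^ 2
          + (4 * t * q ^ 2) * φ i (F n y)) :=
      (hsqDsum.mul_left 2).add ((hφsum (F n y)).summable.mul_left _)
    have h6 : ‖ξ x - ξ y‖ ^ 2 ≤ 2 * ε ^ 2 := by
      rw [hnormsq]
      have hstep1 := Summable.tsum_le_tsum hterm hLsum hTsum
      have hstep2 : (∑' i, (2 * (Real.sqrt (φ i (F n x)) - Real.sqrt (φ i (F n y))) ^ 2
          + (4 * t * q ^ 2) * φ i (F n y)))
          = 2 * (∑' i, (Real.sqrt (φ i (F n x)) - Real.sqrt (φ i (F n y))) ^ 2)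
            + (4 * t * q ^ 2) * (∑' i, φ i (F n y)) := by
        rw [Summable.tsum_add (hsqDsum.mul_left 2) ((hφsum (F n y)).summable.mul_left _),
          tsum_mul_left, tsum_mul_left]
      have hstep3 : (∑' i, (Real.sqrt (φ i (F n x)) - Real.sqrt (φ i (F n y))) ^ 2) ≤ s := by
        have := Summable.tsum_le_tsum hsqD hsqDsum hDsum
        rwa [hs.tsum_eq] at this
      have hstep4 : (∑' i, φ i (F n y)) = 1 := (hφsum (F n y)).tsum_eq
      rw [hstep2, hstep4] at hstep1
      have : (∑' i, (Real.sqrt (φ i (F n x)) - Real.sqrt (φ i (F n y))) ^ 2) ≥ 0 :=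
        tsum_nonneg fun i => sq_nonneg _
      nlinarith
    nlinarith [norm_nonneg (ξ x - ξ y), hεpos]
  -- (C) far pairs
  have hfar : ∀ x y : X n, max S₀ 0 ≤ dist x y → 1 ≤ ‖ξ x - ξ y‖ := by
    intro x y hxy
    have hinner : ⟪ξ x, ξ y⟫_ℝ ≤ 1 / 2 := by
      rw [lp.inner_eq_tsum]
      have hRsum : Summable (fun i => (φ i (F n x) + φ i (F n y)) / 4) :=
        ((hφsum (F n x)).summable.add (hφsum (F n y)).summable).div_const 4
      have hterm : ∀ i, ⟪(ξ x : ∀ _ : I, GaussSpace (H' n)) i,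
          (ξ y : ∀ _ : I, GaussSpace (H' n)) i⟫_ℝ ≤ (φ i (F n x) + φ i (F n y)) / 4 := by
        intro i
        rw [hξcoord, hξcoord, real_inner_smul_left, real_inner_smul_right]
        by_cases hx0 : φ i (F n x) = 0
        · rw [hx0, Real.sqrt_zero, zero_mul]
          have := hφnn i (F n y)
          positivity
        by_cases hy0 : φ i (F n y) = 0
        · rw [hy0, Real.sqrt_zero, zero_mul, mul_zero]
          have := hφnn i (F n x)
          positivity
        · have hxball := hmem i x hx0
          have hyball := hmem i y hy0
          rw [hη_eq i x hxball, hη_eq i y hyball, inner_gaussE]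
          set Δ := ψ n ⟨g i • x, hxball⟩ - ψ n ⟨g i • y, hyball⟩ with hΔdef
          have hdge : max S₀ 0 ≤ dist ((⟨g i • x, hxball⟩ :
              {x : X n // F n x ∈ Metric.closedBall (y₀ n) R''}) : X n)
              ((⟨g i • y, hyball⟩ : {x : X n // F n x ∈ Metric.closedBall (y₀ n) R''}) : X n) := by
            have h2 : dist (g i • x : X n) (g i • y : X n) = dist x y :=
              (hisoX n (g i)).dist_eq x y
            simpa [h2] using hxy
          have hρmge : Real.sqrt (Real.log 2 / t) ≤ ρm (dist ((⟨g i • x, hxball⟩ :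
              {x : X n // F n x ∈ Metric.closedBall (y₀ n) R''}) : X n)
              ((⟨g i • y, hyball⟩ : {x : X n // F n x ∈ Metric.closedBall (y₀ n) R''}) : X n)) := by
            refine hS₀ _ ?_
            show S₀ ≤ dist (g i • x : X n) (g i • y)
            rw [(hisoX n (g i)).dist_eq x y]
            exact le_trans (le_max_left S₀ 0) hxy
          have hψge : Real.sqrt (Real.log 2 / t) ≤ ‖Δ‖ := by
            have h1 : ρm (dist ((⟨g i • x, hxball⟩ :
                {x : X n // F n x ∈ Metric.closedBall (y₀ n) R''}) : X n)
                ((⟨g i • y, hyball⟩ : {x : X n // F n x ∈ Metric.closedBall (y₀ n) R''}) : X n))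
                ≤ dist (ψ n ⟨g i • x, hxball⟩) (ψ n ⟨g i • y, hyball⟩) :=
              (hψ n ⟨g i • x, hxball⟩ ⟨g i • y, hyball⟩).1
            rw [dist_eq_norm] at h1
            exact le_trans hρmge h1
          have hsq : Real.log 2 / t ≤ ‖Δ‖ ^ 2 := by
            nlinarith [Real.sq_sqrt hlog, Real.sqrt_nonneg (Real.log 2 / t), norm_nonneg Δ]
          have hexp : Real.exp (-t * ‖Δ‖ ^ 2) ≤ 1 / 2 := by
            have h1 : Real.log 2 ≤ t * ‖Δ‖ ^ 2 := by
              have := (div_le_iff₀ htpos).1 hsq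
              linarith
            calc Real.exp (-t * ‖Δ‖ ^ 2) ≤ Real.exp (-Real.log 2) :=
                  Real.exp_le_exp.2 (by linarith)
              _ = 1 / 2 := by rw [Real.exp_neg, Real.exp_log (by norm_num)]; norm_num
          have hab : Real.sqrt (φ i (F n x)) * Real.sqrt (φ i (F n y))
              ≤ (φ i (F n x) + φ i (F n y)) / 2 := by
            nlinarith [sq_nonneg (Real.sqrt (φ i (F n x)) - Real.sqrt (φ i (F n y))),
              Real.sq_sqrt (hφnn i (F n x)), Real.sq_sqrt (hφnn i (F n y))]
          have hexp_pos := Real.exp_pos (-t * ‖Δ‖ ^ 2)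
          have h2 := Real.sqrt_nonneg (φ i (F n x))
          have h3 := Real.sqrt_nonneg (φ i (F n y))
          nlinarith [mul_nonneg h2 h3]
      have hLsum : Summable (fun i => ⟪(ξ x : ∀ _ : I, GaussSpace (H' n)) i,
          (ξ y : ∀ _ : I, GaussSpace (H' n)) i⟫_ℝ) := lp.summable_inner (ξ x) (ξ y)
      have hstep := Summable.tsum_le_tsum hterm hLsum hRsum
      have hval : (∑' i, (φ i (F n x) + φ i (F n y)) / 4) = 1 / 2 := by
        rw [tsum_div_const, Summable.tsum_add (hφsum (F n x)).summable (hφsum (F n y)).summable,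
          (hφsum (F n x)).tsum_eq, (hφsum (F n y)).tsum_eq]
        norm_num
      rwa [hval] at hstep
    have hn2 : 1 ≤ ‖ξ x - ξ y‖ ^ 2 := by
      rw [norm_sub_sq_real, hξnorm x, hξnorm y]
      linarith
    nlinarith [norm_nonneg (ξ x - ξ y)]
  -- package
  refine ⟨lp (fun _ : I => GaussSpace (H' n)) 2, inferInstance, inferInstance, inferInstance,
    ξ, ?_, ?_, ?_⟩
  · intro x y
    show dist (ξ x) (ξ y) ≤ 2
    rw [dist_eq_norm]
    calc ‖ξ x - ξ y‖ ≤ ‖ξ x‖ + ‖ξ y‖ := norm_sub_le _ _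
      _ = 2 := by rw [hξnorm x, hξnorm y]; norm_num
  · intro x y h
    show dist (ξ x) (ξ y) ≤ 2 * (2 : ℝ) ^ (-(k : ℤ))
    rw [dist_eq_norm]
    exact hclose x y h
  · intro x y h
    show 1 ≤ dist (ξ x) (ξ y)
    rw [dist_eq_norm]
    exact hfar x y h

end St15

/-- Fibering lemma: given `G`-equivariant 1-Lipschitz maps
`F_n : X_n → Y_n` onto an equi-exact sequence with uniformly cobounded isometric
`G`-actions, if the preimages of balls embed uniformly then `(X_n)` embeds uniformly. -/
theorem statement15 {G : Type*} [Group G] (X Y : ℕ → Type*)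
    [∀ n, MetricSpace (X n)] [∀ n, MetricSpace (Y n)]
    [∀ n, MulAction G (X n)] [∀ n, MulAction G (Y n)]
    (hisoX : ∀ n (g : G), Isometry (fun x : X n => g • x))
    (hisoY : ∀ n (g : G), Isometry (fun y : Y n => g • y))
    (F : ∀ n, X n → Y n)
    (hFlip : ∀ n, LipschitzWith 1 (F n))
    (hFequiv : ∀ n (g : G) (x : X n), F n (g • x) = g • F n x)
    (hYexact : EquiExact Y (fun n (y y' : Y n) => dist y y'))
    (hcobdd : ∃ C > (0:ℝ), ∀ n (y y' : Y n), ∃ g : G, dist (g • y) y' ≤ C)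
    (y₀ : ∀ n, Y n)
    (hballs : ∀ R : ℝ, 0 ≤ R →
      UnifCoarseEmbedHilbert
        (fun n => {x : X n // F n x ∈ Metric.closedBall (y₀ n) R})
        (fun n a b => dist (a : X n) (b : X n))) :
    UnifCoarseEmbedHilbert X (fun n (x y : X n) => dist x y) := by
  refine St15.assemble fun k => ?_
  exact St15.scale X Y hisoX hisoY F hFlip hFequiv hYexact hcobdd y₀ hballs k
end
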